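/- arXiv:2412.17074 — 8 statements merged into one kernel-verified Lean document; each statement's English description precedes it below -/
import Mathlib

section
/- If G is a connected graph with at least 2 vertices whose vertex set is partitioned into k true twin equivalence classes, then the local metric dimension of G is at least n(G) - k. -/
open SimpleGraph

variable {V : Type*}

/-- `W` is a local resolving set of `G`: any two adjacent vertices outside `W`
have different distance to some vertex of `W`. -/
def IsLocalResolvingSet [Fintype V] (G : SimpleGraph V) (W : Finset V) : Prop :=
  ∀ u v : V, u ∉ W → v ∉ W → G.Adj u v → ∃ w ∈ W, G.dist u w ≠ G.dist v w

/-- The local metric dimension of `G`: minimum cardinality of a local resolving set. -/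
noncomputable def localDim [Fintype V] (G : SimpleGraph V) : ℕ :=
  sInf {k | ∃ W : Finset V, IsLocalResolvingSet G W ∧ W.card = k}

/-- `K_n^-(λ,μ)`: complete graph on `Fin n` minus the edges of a complete bipartite
subgraph between `L = [0,lam)` and `M = [lam, lam+mu)`. -/
def KnMinus (n lam mu : ℕ) : SimpleGraph (Fin n) where
  Adj u v := u ≠ v ∧ ¬((u.val < lam ∧ lam ≤ v.val ∧ v.val < lam + mu) ∨
                       (v.val < lam ∧ lam ≤ u.val ∧ u.val < lam + mu))
  symm := by
    constructor
    intro u v ⟨h1, h2⟩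
    exact ⟨h1.symm, fun h => h2 h.symm⟩
  loopless := ⟨fun u h => h.1 rfl⟩

/-- The graph `Γ₁`: a `K₄` on `{0,1,2,3}` plus edges `0-4`, `1-4`, `0-5`, `2-5`
(vertices `0,…,5` standing for `v₁,…,v₆`). -/
def Gamma1 : SimpleGraph (Fin 6) :=
  SimpleGraph.fromRel (fun u v => ((u : ℕ), (v : ℕ)) ∈
    [(0,1),(0,2),(0,3),(1,2),(1,3),(2,3),(0,4),(1,4),(0,5),(2,5)])

/-- The graph `Γ₂ = Γ₁` plus the edge `v₅v₆`. -/
def Gamma2 : SimpleGraph (Fin 6) :=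
  SimpleGraph.fromRel (fun u v => ((u : ℕ), (v : ℕ)) ∈
    [(0,1),(0,2),(0,3),(1,2),(1,3),(2,3),(0,4),(1,4),(0,5),(2,5),(4,5)])

/-- `G_ℓ`: a universal vertex (`none`) joined to the disjoint union of `ℓ` triangles. -/
def Gell (l : ℕ) : SimpleGraph (Option (Fin l × Fin 3)) where
  Adj u v := u ≠ v ∧ ∀ x y, u = some x → v = some y → x.1 = y.1
  symm := by
    constructor
    intro u v ⟨h1, h2⟩
    exact ⟨h1.symm, fun x y hx hy => (h2 y x hy hx).symm⟩
  loopless := ⟨fun u h => h.1 rfl⟩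

lemma twin_dist_le (G : SimpleGraph V) (hconn : G.Connected) {u v : V}
    (h : ∀ x : V, (G.Adj v x ∨ v = x) → (G.Adj u x ∨ u = x)) (w : V) (hwv : w ≠ v) :
    G.dist u w ≤ G.dist v w := by
  obtain ⟨p, hp⟩ := hconn.exists_walk_length_eq_dist v w
  cases p with
  | nil => exact absurd rfl hwv.symm
  | cons hadj q =>
    rename_i x
    rcases h x (Or.inl hadj) with hux | hux
    · calc G.dist u w ≤ G.dist u x + G.dist x w := hconn.dist_triangle
        _ ≤ 1 + q.length := by
            gcongr
            · exact le_of_eq (dist_eq_one_iff_adj.mpr hux)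
            · exact dist_le q
        _ = G.dist v w := by rw [← hp]; simp [Walk.length_cons]; ring
    · calc G.dist u w = G.dist x w := by rw [hux]
        _ ≤ q.length := dist_le q
        _ ≤ G.dist v w := by rw [← hp]; simp [Walk.length_cons]

/-- If a connected graph `G` with at least 2 vertices has its vertex set partitioned into
`k` true twin equivalence classes, then `dim_l(G) ≥ n(G) - k`. -/
theorem stmt_0 [Fintype V] (G : SimpleGraph V) (hn : 2 ≤ Fintype.card V)
    (hconn : G.Connected) (k : ℕ) (f : V → Fin k) (hsurj : Function.Surjective f)
    (hf : ∀ u v : V, f u = f v ↔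
      ∀ x : V, (G.Adj u x ∨ u = x) ↔ (G.Adj v x ∨ v = x)) :
    Fintype.card V - k ≤ localDim G := by
  classical
  have hne : {m | ∃ W : Finset V, IsLocalResolvingSet G W ∧ W.card = m}.Nonempty := by
    refine ⟨Fintype.card V, Finset.univ, ?_, Finset.card_univ⟩
    intro u v hu hv _
    exact absurd (Finset.mem_univ u) hu
  obtain ⟨W, hW, hWcard⟩ := Nat.sInf_mem hne
  rw [localDim] at *
  rw [← hWcard]
  have hinj : Set.InjOn f (↑Wᶜ : Set V) := by
    intro u hu v hv hfuv
    by_contra hne'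
    have hu' : u ∉ W := by simpa using hu
    have hv' : v ∉ W := by simpa using hv
    have htwin := (hf u v).mp hfuv
    have hadj : G.Adj u v := by
      rcases (htwin v).mpr (Or.inr rfl) with h | h
      · exact h
      · exact absurd h hne'
    obtain ⟨w, hwW, hwd⟩ := hW u v hu' hv' hadj
    have hwu : w ≠ u := fun h => hu' (h ▸ hwW)
    have hwv : w ≠ v := fun h => hv' (h ▸ hwW)
    exact hwd (le_antisymm
      (twin_dist_le G hconn (fun x hx => (htwin x).mpr hx) w hwv)
      (twin_dist_le G hconn (fun x hx => (htwin x).mp hx) w hwu))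
  have hcard : (Wᶜ : Finset V).card ≤ k := by
    have := Finset.card_le_card_of_injOn f
      (fun a _ => Finset.mem_univ (f a)) hinj
    simpa using this
  have h1 : (Wᶜ : Finset V).card = Fintype.card V - W.card := Finset.card_compl W
  have h2 : W.card ≤ Fintype.card V := Finset.card_le_univ W
  omega
end

section
/- For a connected graph G with n(G) ≥ 3, the local metric dimension of G equals n(G) - 1 if and only if G is the complete graph K_{n(G)}. -/
open SimpleGraph

variable {V : Type*}

/-- For a connected graph `G` with `n(G) ≥ 3`, `dim_l(G) = n(G) - 1` iff `G` is complete. -/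
theorem stmt_1 [Fintype V] (G : SimpleGraph V) (hn : 3 ≤ Fintype.card V)
    (hconn : G.Connected) :
    localDim G = Fintype.card V - 1 ↔ G = ⊤ := by
  classical
  constructor
  · intro h
    by_contra hne
    have hex : ∃ a b : V, a ≠ b ∧ ¬ G.Adj a b := by
      by_contra hc
      push_neg at hc
      apply hne
      ext a b
      simp only [top_adj]
      exact ⟨fun h' => h'.ne, fun hab => hc a b hab⟩
    obtain ⟨a, b, hab, hnadj⟩ := hex
    have hmem : (Fintype.card V - 2) ∈
        {k | ∃ W : Finset V, IsLocalResolvingSet G W ∧ W.card = k} := by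
      refine ⟨Finset.univ \ {a, b}, ?_, ?_⟩
      · intro u v hu hv huv
        simp only [Finset.mem_sdiff, Finset.mem_univ, true_and, not_not,
          Finset.mem_insert, Finset.mem_singleton] at hu hv
        rcases hu with rfl | rfl <;> rcases hv with rfl | rfl <;>
          first
            | exact absurd huv G.irrefl
            | exact absurd huv hnadj
            | exact absurd huv.symm hnadj
      · rw [Finset.card_sdiff_of_subset (Finset.subset_univ _)]
        simp [Finset.card_pair hab]
    have hle : localDim G ≤ Fintype.card V - 2 := Nat.sInf_le hmem
    omega
  · intro h
    subst h
    have hne : Nonempty V := Fintype.card_pos_iff.mp (by omega)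
    obtain ⟨a⟩ := hne
    have hmem : (Fintype.card V - 1) ∈
        {k | ∃ W : Finset V, IsLocalResolvingSet (⊤ : SimpleGraph V) W ∧ W.card = k} := by
      refine ⟨Finset.univ.erase a, ?_, ?_⟩
      · intro u v hu hv huv
        have hu' : u = a := by
          by_contra h'
          exact hu (Finset.mem_erase.mpr ⟨h', Finset.mem_univ _⟩)
        have hv' : v = a := by
          by_contra h'
          exact hv (Finset.mem_erase.mpr ⟨h', Finset.mem_univ _⟩)
        subst hu'; subst hv'
        exact absurd huv (⊤ : SimpleGraph V).irrefl
      · rw [Finset.card_erase_of_mem (Finset.mem_univ _), Finset.card_univ]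
    refine le_antisymm (Nat.sInf_le hmem) (le_csInf ⟨_, hmem⟩ ?_)
    rintro k ⟨W, hW, rfl⟩
    by_contra hlt
    push_neg at hlt
    have hcompl : 1 < Wᶜ.card := by
      rw [Finset.card_compl]
      omega
    obtain ⟨u, hu, v, hv, huv⟩ := Finset.one_lt_card.mp hcompl
    rw [Finset.mem_compl] at hu hv
    obtain ⟨w, hw, hdist⟩ := hW u v hu hv (by simpa using huv)
    have huw : u ≠ w := fun h' => hu (h' ▸ hw)
    have hvw : v ≠ w := fun h' => hv (h' ▸ hw)
    apply hdist
    rw [SimpleGraph.dist_eq_one_iff_adj.mpr (by simpa using huw),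
        SimpleGraph.dist_eq_one_iff_adj.mpr (by simpa using hvw)]
end

section
/- For a connected graph G with n(G) ≥ 3, the local metric dimension of G equals n(G) - 2 if and only if the clique number ω(G) equals n(G) - 1. -/
open SimpleGraph

variable {V : Type*}

/-- closed neighborhood membership -/
def Nc (G : SimpleGraph V) (a w : V) : Prop := a = w ∨ G.Adj a w

def Twin (G : SimpleGraph V) (a b : V) : Prop := ∀ w, Nc G a w ↔ Nc G b w

lemma nc_refl (G : SimpleGraph V) (a : V) : Nc G a a := Or.inl rfl

lemma nc_symm {G : SimpleGraph V} {a w : V} (h : Nc G a w) : Nc G w a := by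
  rcases h with h | h
  · exact Or.inl h.symm
  · exact Or.inr h.symm

lemma twin_ne {G : SimpleGraph V} {a b : V} (h : ¬ Twin G a b) : a ≠ b := by
  rintro rfl; exact h fun w => Iff.rfl

lemma twin_symm {G : SimpleGraph V} {a b : V} (h : Twin G a b) : Twin G b a :=
  fun w => (h w).symm

/-- key distance discriminator -/
lemma resolve {G : SimpleGraph V} (hconn : G.Connected) {a b w : V}
    (h1 : Nc G a w) (h2 : ¬ Nc G b w) : G.dist a w ≠ G.dist b w := by
  have hbw : b ≠ w := fun h => h2 (Or.inl h)
  have hbadj : ¬ G.Adj b w := fun h => h2 (Or.inr h)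
  rcases h1 with rfl | h
  · have : G.dist a a = 0 := by simp
    rw [this]
    intro h0
    exact hbw ((hconn.dist_eq_zero_iff).mp h0.symm)
  · have h1' : G.dist a w = 1 := dist_eq_one_iff_adj.mpr h
    rw [h1']
    intro h0
    exact hbadj (dist_eq_one_iff_adj.mp h0.symm)

def Good (G : SimpleGraph V) (u v x : V) : Prop :=
  ∀ p q : V, (p = u ∨ p = v ∨ p = x) → (q = u ∨ q = v ∨ q = x) → G.Adj p q →
    ∃ w, ¬(w = u ∨ w = v ∨ w = x) ∧ G.dist p w ≠ G.dist q w


lemma good_localDim_le [Fintype V] {G : SimpleGraph V} (u v x : V)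
    (huv : u ≠ v) (hux : u ≠ x) (hvx : v ≠ x) (hgood : Good G u v x) :
    localDim G ≤ Fintype.card V - 3 := by
  classical
  set W : Finset V := Finset.univ \ {u, v, x} with hW
  have hmem : ∀ p : V, p ∉ W ↔ (p = u ∨ p = v ∨ p = x) := by
    intro p; simp only [hW, Finset.mem_sdiff, Finset.mem_univ, true_and, not_not,
      Finset.mem_insert, Finset.mem_singleton]
  have hres : IsLocalResolvingSet G W := by
    intro p q hp hq hadj
    obtain ⟨w, hw, hne⟩ := hgood p q ((hmem p).mp hp) ((hmem q).mp hq) hadj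
    exact ⟨w, by simpa using (hmem w).not.mpr (by simpa using hw), hne⟩
  have hcard : W.card = Fintype.card V - 3 := by
    rw [hW, Finset.card_sdiff_of_subset (Finset.subset_univ _), Finset.card_univ]
    congr 1
    rw [Finset.card_insert_of_notMem (by simp [huv, hux]),
      Finset.card_insert_of_notMem (by simp [hvx]), Finset.card_singleton]
  exact Nat.sInf_le ⟨W, hres, hcard⟩

lemma helper [Fintype V] {G : SimpleGraph V} (hconn : G.Connected)
    (hn : 3 ≤ Fintype.card V) (hw : G.cliqueNum ≤ Fintype.card V - 2)
    (a b c : V) (hab : ¬ G.Adj a b) (hnab : a ≠ b)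
    (hca : ¬ Twin G c a) (hcb : ¬ Twin G c b)
    (hac : G.Adj a c)
    (hsub : ∀ w, ¬(Nc G a w ↔ Nc G c w) → w = b) :
    ∃ u v x : V, u ≠ v ∧ u ≠ x ∧ v ≠ x ∧ Good G u v x := by
  classical
  have hcb' : c ≠ b := twin_ne hcb
  have hNab : ¬ Nc G a b := by rintro (rfl | h) <;> [exact hnab rfl; exact hab h]
  -- b is in the symmetric difference of N[a], N[c]
  have hNcb : Nc G c b := by
    obtain ⟨w0, hw0⟩ : ∃ w0, ¬(Nc G a w0 ↔ Nc G c w0) := by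
      by_contra h; push_neg at h
      exact hca (twin_symm fun w => h w)
    have := hsub w0 hw0
    subst this
    by_contra hNc
    exact hw0 ⟨fun h => absurd h hNab, fun h => absurd h hNc⟩
  by_cases hz : ∃ z, ¬ Twin G z a ∧ ¬ Twin G z c ∧ z ≠ b
  · obtain ⟨z, hza, hzc, hzb⟩ := hz
    have haz : a ≠ z := (twin_ne hza).symm
    have hcz : c ≠ z := (twin_ne hzc).symm
    have hacne : a ≠ c := hac.ne
    -- K1 : resolve pair (a,c) by b
    have K1 : ∃ w, ¬(w = a ∨ w = c ∨ w = z) ∧ G.dist a w ≠ G.dist c w := by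
      refine ⟨b, ?_, ?_⟩
      · rintro (h | h | h)
        exacts [hnab h.symm, hcb' h.symm, hzb h.symm]
      · intro h; exact (resolve hconn hNcb hNab) h.symm
    -- K2 : pair (a,z)
    have K2 : G.Adj a z → ∃ w, ¬(w = a ∨ w = c ∨ w = z) ∧ G.dist a w ≠ G.dist z w := by
      intro haz'
      by_contra h; push_neg at h
      apply hza
      apply twin_symm
      intro w
      by_contra hiff
      -- w ∉ {a, z}
      have hwa : w ≠ a := by
        rintro rfl
        exact hiff ⟨fun _ => Or.inr haz'.symm, fun _ => Or.inl rfl⟩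
      have hwz : w ≠ z := by
        rintro rfl
        exact hiff ⟨fun _ => Or.inl rfl, fun _ => Or.inr haz'⟩
      -- w ≠ c : since c is adjacent to both a and z
      have hNcz : Nc G c z := by
        have := hsub z
        have hNaz : Nc G a z := Or.inr haz'
        by_contra hNc
        exact hzb (this (fun hiff' => hNc (hiff'.mp hNaz)))
      have hAcz : G.Adj c z := by
        rcases hNcz with h' | h'
        · exact absurd h' hcz
        · exact h'
      have hwc : w ≠ c := by
        rintro rfl
        exact hiff ⟨fun _ => Or.inr hAcz.symm, fun _ => Or.inr hac⟩
      -- so w is outside the triple and distances agree, contradicting hiff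
      have heq := h w ⟨hwa, hwc, hwz⟩
      rcases Classical.em (Nc G a w) with hNa | hNa
      · rcases Classical.em (Nc G z w) with hNz | hNz
        · exact hiff ⟨fun _ => hNz, fun _ => hNa⟩
        · exact resolve hconn hNa hNz heq
      · rcases Classical.em (Nc G z w) with hNz | hNz
        · exact resolve hconn hNz hNa heq.symm
        · exact hiff ⟨fun h' => absurd h' hNa, fun h' => absurd h' hNz⟩
    -- K3 : pair (c,z)
    have K3 : G.Adj c z → ∃ w, ¬(w = a ∨ w = c ∨ w = z) ∧ G.dist c w ≠ G.dist z w := by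
      intro hcz'
      by_contra h; push_neg at h
      apply hzc
      apply twin_symm
      intro w
      by_contra hiff
      have hwc : w ≠ c := by
        rintro rfl
        exact hiff ⟨fun _ => Or.inr hcz'.symm, fun _ => Or.inl rfl⟩
      have hwz : w ≠ z := by
        rintro rfl
        exact hiff ⟨fun _ => Or.inl rfl, fun _ => Or.inr hcz'⟩
      have hNaz : Nc G a z := by
        have := hsub z
        have hNcz : Nc G c z := Or.inr hcz'
        by_contra hNa
        exact hzb (this (fun hiff' => hNa (hiff'.mpr hNcz)))
      have hAaz : G.Adj a z := by
        rcases hNaz with h' | h'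
        · exact absurd h' haz
        · exact h'
      have hwa : w ≠ a := by
        rintro rfl
        exact hiff ⟨fun _ => Or.inr hAaz.symm, fun _ => Or.inr hac.symm⟩
      have heq := h w ⟨hwa, hwc, hwz⟩
      rcases Classical.em (Nc G c w) with hNc | hNc
      · rcases Classical.em (Nc G z w) with hNz | hNz
        · exact hiff ⟨fun _ => hNz, fun _ => hNc⟩
        · exact resolve hconn hNc hNz heq
      · rcases Classical.em (Nc G z w) with hNz | hNz
        · exact resolve hconn hNz hNc heq.symm
        · exact hiff ⟨fun h' => absurd h' hNc, fun h' => absurd h' hNz⟩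
    refine ⟨a, c, z, hacne, haz, hcz, ?_⟩
    rintro p q (rfl | rfl | rfl) (rfl | rfl | rfl) hadj
    · exact absurd hadj (G.loopless.irrefl _)
    · exact K1
    · exact K2 hadj
    · obtain ⟨w, h1, h2⟩ := K1; exact ⟨w, h1, h2.symm⟩
    · exact absurd hadj (G.loopless.irrefl _)
    · exact K3 hadj
    · obtain ⟨w, h1, h2⟩ := K2 hadj.symm; exact ⟨w, h1, h2.symm⟩
    · obtain ⟨w, h1, h2⟩ := K3 hadj.symm; exact ⟨w, h1, h2.symm⟩
    · exact absurd hadj (G.loopless.irrefl _)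
  · -- no such z : V ∖ {b} is a clique of size n - 1, contradiction
    exfalso
    push_neg at hz
    have hkey : ∀ y : V, y ≠ b → Nc G a y ∧ Nc G c y := by
      intro y hyb
      have hiff : Nc G a y ↔ Nc G c y := by
        by_contra h; exact hyb (hsub y h)
      rcases Classical.em (Twin G y a) with hya | hya
      · have hNay : Nc G a y := (hya y).mp (Or.inl rfl)
        exact ⟨hNay, hiff.mp hNay⟩
      · have hyc := hz y hya
        rcases Classical.em (Twin G y c) with hyc' | hyc'
        · have hNcy : Nc G c y := (hyc' y).mp (Or.inl rfl)
          exact ⟨hiff.mpr hNcy, hNcy⟩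
        · exact absurd (hyc hyc') hyb
    have hclique : G.IsClique (Finset.univ.erase b : Finset V) := by
      intro p hp q hq hpq
      simp only [Finset.coe_erase, Set.mem_diff] at hp hq
      have hpb : p ≠ b := by simpa using hp.2
      have hqb : q ≠ b := by simpa using hq.2
      obtain ⟨hpa, hpc⟩ := hkey p hpb
      obtain ⟨hqa, hqc⟩ := hkey q hqb
      -- p and q are both "twins of a or c"; show adjacency
      rcases Classical.em (Twin G p a) with hpa' | hpa'
      · have : Nc G p q := (hpa' q).mpr hqa
        rcases this with h' | h'
        · exact absurd h' hpq
        · exact h'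
      · have hpc' : Twin G p c := by
          rcases Classical.em (Twin G p c) with h' | h'
          · exact h'
          · exact absurd (hz p hpa' h') hpb
        have : Nc G p q := (hpc' q).mpr hqc
        rcases this with h' | h'
        · exact absurd h' hpq
        · exact h'
    have hcard : (Finset.univ.erase b : Finset V).card = Fintype.card V - 1 := by
      rw [Finset.card_erase_of_mem (Finset.mem_univ b), Finset.card_univ]
    have hle := SimpleGraph.IsClique.card_le_cliqueNum (tc := hclique)
    rw [hcard] at hle
    omega

lemma exists_good [Fintype V] {G : SimpleGraph V} (hconn : G.Connected)
    (hn : 3 ≤ Fintype.card V) (hw : G.cliqueNum ≤ Fintype.card V - 2) :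
    ∃ u v x : V, u ≠ v ∧ u ≠ x ∧ v ≠ x ∧ Good G u v x := by
  classical
  -- G is not complete
  obtain ⟨a, b, hnab, hab⟩ : ∃ a b : V, a ≠ b ∧ ¬ G.Adj a b := by
    by_contra h; push_neg at h
    have hclique : G.IsClique (Finset.univ : Finset V) := by
      intro p _ q _ hpq; exact h p q hpq
    have hle := SimpleGraph.IsClique.card_le_cliqueNum (tc := hclique)
    rw [Finset.card_univ] at hle
    omega
  -- a vertex not twin to a nor b
  obtain ⟨c, hca, hcb⟩ : ∃ c, ¬ Twin G c a ∧ ¬ Twin G c b := by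
    by_contra h; push_neg at h
    have hTab : ¬ Twin G b a := by
      intro ht
      rcases (ht b).mp (Or.inl rfl) with h' | h'
      · exact hnab h'
      · exact hab h'
    have key : ∀ x y : V, G.Adj x y → Twin G x a → Twin G y a := by
      intro x y hxy htx
      by_contra hty
      have htyb : Twin G y b := h y hty
      have hNay : Nc G a y := (htx y).mp (Or.inr hxy)
      rcases hNay with h' | h'
      · apply hty
        rw [← h']
        exact fun w => Iff.rfl
      · have : Nc G b a := (htyb a).mp (Or.inr h'.symm)
        rcases this with h'' | h''
        · exact hnab h''.symm
        · exact hab h''.symm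
    have walkTwin : ∀ (x y : V) (p : G.Walk x y), Twin G x a → Twin G y a := by
      intro x y p
      induction p with
      | nil => exact id
      | cons hadj q ih => exact fun hx => ih (key _ _ hadj hx)
    obtain ⟨p⟩ := hconn.preconnected a b
    exact hTab (walkTwin a b p (fun w => Iff.rfl))
  by_cases hgood : Good G a b c
  · exact ⟨a, b, c, hnab, (twin_ne hca).symm, (twin_ne hcb).symm, hgood⟩
  unfold Good at hgood
  push_neg at hgood
  obtain ⟨p, q, hp, hq, hadj, hall⟩ := hgood
  have main : ∀ a' b' : V, a' ≠ b' → ¬G.Adj a' b' → ¬Twin G c a' → ¬Twin G c b' →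
      G.Adj a' c → (∀ w, w ≠ a' → w ≠ b' → w ≠ c → G.dist a' w = G.dist c w) →
      ∃ u v x : V, u ≠ v ∧ u ≠ x ∧ v ≠ x ∧ Good G u v x := by
    intro a' b' h1 h2 h3 h4 h5 h6
    refine helper hconn hn hw a' b' c h2 h1 h3 h4 h5 ?_
    intro w hiff
    by_contra hwb
    have hwa : w ≠ a' := by
      rintro rfl; exact hiff ⟨fun _ => Or.inr h5.symm, fun _ => Or.inl rfl⟩
    have hwc : w ≠ c := by
      rintro rfl; exact hiff ⟨fun _ => Or.inl rfl, fun _ => Or.inr h5⟩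
    have heq := h6 w hwa hwb hwc
    rcases Classical.em (Nc G a' w) with hN1 | hN1
    · rcases Classical.em (Nc G c w) with hN2 | hN2
      · exact hiff ⟨fun _ => hN2, fun _ => hN1⟩
      · exact resolve hconn hN1 hN2 heq
    · rcases Classical.em (Nc G c w) with hN2 | hN2
      · exact resolve hconn hN2 hN1 heq.symm
      · exact hiff ⟨fun h' => absurd h' hN1, fun h' => absurd h' hN2⟩
  rcases hp with hp | hp | hp <;> rcases hq with hq | hq | hq <;>
    rw [hp, hq] at hadj hall
  · exact absurd hadj (G.loopless.irrefl _)
  · exact absurd hadj hab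
  · exact main a b hnab hab hca hcb hadj
      (fun w h1 h2 h3 => hall w (by tauto))
  · exact absurd hadj.symm hab
  · exact absurd hadj (G.loopless.irrefl _)
  · exact main b a hnab.symm (fun h' => hab h'.symm) hcb hca hadj
      (fun w h1 h2 h3 => hall w (by tauto))
  · exact main a b hnab hab hca hcb hadj.symm
      (fun w h1 h2 h3 => (hall w (by tauto)).symm)
  · exact main b a hnab.symm (fun h' => hab h'.symm) hcb hca hadj.symm
      (fun w h1 h2 h3 => (hall w (by tauto)).symm)
  · exact absurd hadj (G.loopless.irrefl _)

/-- For a connected graph `G` with `n(G) ≥ 3`, `dim_l(G) = n(G) - 2` iff `ω(G) = n(G) - 1`. -/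
theorem stmt_2 [Fintype V] (G : SimpleGraph V) (hn : 3 ≤ Fintype.card V)
    (hconn : G.Connected) :
    localDim G = Fintype.card V - 2 ↔ G.cliqueNum = Fintype.card V - 1 := by
  classical
  have hSne : Set.Nonempty {k | ∃ W : Finset V, IsLocalResolvingSet G W ∧ W.card = k} :=
    ⟨Fintype.card V, Finset.univ, fun u v hu _ _ => absurd (Finset.mem_univ u) hu, by simp⟩
  constructor
  · intro h
    obtain ⟨s, hs⟩ := G.exists_isNClique_cliqueNum
    have hsle : G.cliqueNum ≤ Fintype.card V := by
      rw [← hs.2]; exact Finset.card_le_univ s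
    have hne_n : G.cliqueNum ≠ Fintype.card V := by
      intro heq
      have hsuniv : s = Finset.univ := Finset.eq_univ_of_card s (by rw [hs.2, heq])
      have hcomp : ∀ x y : V, x ≠ y → G.Adj x y := by
        intro x y hxy
        exact hs.1 (by rw [hsuniv]; exact Finset.mem_coe.mpr (Finset.mem_univ x))
          (by rw [hsuniv]; exact Finset.mem_coe.mpr (Finset.mem_univ y)) hxy
      have h' : localDim G = Fintype.card V - 2 := h
      unfold localDim at h'
      have hmem : (Fintype.card V - 2) ∈
          {k | ∃ W : Finset V, IsLocalResolvingSet G W ∧ W.card = k} := by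
        rw [← h']; exact Nat.sInf_mem hSne
      obtain ⟨W, hres, hcard⟩ := hmem
      have hc2 : 1 < (Wᶜ).card := by rw [Finset.card_compl, hcard]; omega
      obtain ⟨x, hx, y, hy, hxy⟩ := Finset.one_lt_card.mp hc2
      have hxW : x ∉ W := Finset.mem_compl.mp hx
      have hyW : y ∉ W := Finset.mem_compl.mp hy
      obtain ⟨w, hwW, hne⟩ := hres x y hxW hyW (hcomp x y hxy)
      apply hne
      have hwx : x ≠ w := by rintro rfl; exact hxW hwW
      have hwy : y ≠ w := by rintro rfl; exact hyW hwW
      rw [dist_eq_one_iff_adj.mpr (hcomp x w hwx), dist_eq_one_iff_adj.mpr (hcomp y w hwy)]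
    have hgt : ¬ (G.cliqueNum ≤ Fintype.card V - 2) := by
      intro hle
      obtain ⟨u, v, x, h1, h2, h3, hg⟩ := exists_good hconn hn hle
      have := good_localDim_le u v x h1 h2 h3 hg
      omega
    omega
  · intro h
    obtain ⟨s, hs⟩ := G.exists_isNClique_cliqueNum
    rw [h] at hs
    have hscard : s.card = Fintype.card V - 1 := hs.2
    have hcompl : (sᶜ).card = 1 := by rw [Finset.card_compl, hscard]; omega
    obtain ⟨u, hu⟩ := Finset.card_eq_one.mp hcompl
    have hmemu : ∀ x : V, x ∉ s → x = u := by
      intro x hx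
      have hx' : x ∈ sᶜ := Finset.mem_compl.mpr hx
      rw [hu] at hx'; simpa using hx'
    have hus : u ∉ s := by
      have : u ∈ sᶜ := by rw [hu]; simp
      exact Finset.mem_compl.mp this
    have hadj_s : ∀ x ∈ s, ∀ y ∈ s, x ≠ y → G.Adj x y := fun x hx y hy hxy =>
      hs.1 (Finset.mem_coe.mpr hx) (Finset.mem_coe.mpr hy) hxy
    obtain ⟨z, hzs, hz⟩ : ∃ z ∈ s, ¬ G.Adj u z := by
      by_contra hcontra; push_neg at hcontra
      have hclique : G.IsClique (Finset.univ : Finset V) := by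
        intro x _ y _ hxy
        by_cases hxs : x ∈ s
        · by_cases hys : y ∈ s
          · exact hadj_s x hxs y hys hxy
          · rw [hmemu y hys]; exact (hcontra x hxs).symm
        · rw [hmemu x hxs]
          by_cases hys : y ∈ s
          · exact hcontra y hys
          · exact absurd ((hmemu x hxs).trans (hmemu y hys).symm) hxy
      have hle := SimpleGraph.IsClique.card_le_cliqueNum (tc := hclique)
      rw [Finset.card_univ, h] at hle
      omega
    obtain ⟨t, hut⟩ : ∃ t, G.Adj u t := by
      obtain ⟨v0, hv0⟩ : ∃ v0 : V, v0 ≠ u :=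
        Fintype.exists_ne_of_one_lt_card (by omega) u
      obtain ⟨p⟩ := hconn.preconnected u v0
      cases p with
      | nil => exact absurd rfl hv0
      | cons h' _ => exact ⟨_, h'⟩
    have hts : t ∈ s := by
      by_contra hts
      rw [hmemu t hts] at hut
      exact G.loopless.irrefl u hut
    -- lower bound
    have hlower : ∀ k ∈ {k | ∃ W : Finset V, IsLocalResolvingSet G W ∧ W.card = k},
        Fintype.card V - 2 ≤ k := by
      rintro k ⟨W, hres, rfl⟩
      by_contra hk
      push_neg at hk
      have hWc : 2 < (Wᶜ).card := by rw [Finset.card_compl]; omega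
      have d2 : ∀ v' : V, v' ∈ s → ¬G.Adj u v' → G.dist v' u = 2 := by
        intro v' hv's hv' 
        have hv'u : v' ≠ u := by rintro rfl; exact hus hv's
        have htv' : t ≠ v' := by rintro rfl; exact hv' hut
        have e1 : G.dist v' t = 1 :=
          dist_eq_one_iff_adj.mpr (hadj_s v' hv's t hts htv'.symm)
        have e2 : G.dist t u = 1 := dist_eq_one_iff_adj.mpr hut.symm
        have htri : G.dist v' u ≤ G.dist v' t + G.dist t u := hconn.dist_triangle
        rw [e1, e2] at htri
        have h0 : G.dist v' u ≠ 0 := fun h' => hv'u (hconn.dist_eq_zero_iff.mp h')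
        have h1 : G.dist v' u ≠ 1 := fun h' => hv' (dist_eq_one_iff_adj.mp h').symm
        omega
      have hbad : ∀ x y : V, x ∈ s → y ∈ s → x ≠ y → x ∉ W → y ∉ W →
          (G.Adj u x ↔ G.Adj u y) → False := by
        intro x y hxs hys hxy hxW hyW hiffu
        obtain ⟨w, hwW, hne⟩ := hres x y hxW hyW (hadj_s x hxs y hys hxy)
        apply hne
        have hwx : w ≠ x := by rintro rfl; exact hxW hwW
        have hwy : w ≠ y := by rintro rfl; exact hyW hwW
        by_cases hws : w ∈ s
        · rw [dist_eq_one_iff_adj.mpr (hadj_s x hxs w hws hwx.symm),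
            dist_eq_one_iff_adj.mpr (hadj_s y hys w hws hwy.symm)]
        · rw [hmemu w hws]
          by_cases hux : G.Adj u x
          · rw [dist_eq_one_iff_adj.mpr hux.symm,
              dist_eq_one_iff_adj.mpr (hiffu.mp hux).symm]
          · rw [d2 x hxs hux, d2 y hys (fun h' => hux (hiffu.mpr h'))]
      by_cases huW : u ∈ W
      · have hsub : Wᶜ ⊆ s := by
          intro x hx
          by_contra hxs
          rw [hmemu x hxs] at hx
          exact (Finset.mem_compl.mp hx) huW
        obtain ⟨x, hx, y, hy, hxy⟩ := Finset.one_lt_card.mp (by omega : 1 < (Wᶜ).card)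
        have h3 : 0 < ((Wᶜ.erase x).erase y).card := by
          rw [Finset.card_erase_of_mem (Finset.mem_erase.mpr ⟨hxy.symm, hy⟩),
            Finset.card_erase_of_mem hx]
          omega
        obtain ⟨z3, hz3⟩ := Finset.card_pos.mp h3
        have hz3y : z3 ≠ y := (Finset.mem_erase.mp hz3).1
        have hz3x : z3 ≠ x := (Finset.mem_erase.mp (Finset.mem_erase.mp hz3).2).1
        have hz3c : z3 ∈ Wᶜ := (Finset.mem_erase.mp (Finset.mem_erase.mp hz3).2).2
        have hxs := hsub hx
        have hys := hsub hy
        have hz3s := hsub hz3c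
        have hxW := Finset.mem_compl.mp hx
        have hyW := Finset.mem_compl.mp hy
        have hz3W := Finset.mem_compl.mp hz3c
        by_cases b1 : G.Adj u x <;> by_cases b2 : G.Adj u y <;> by_cases b3 : G.Adj u z3
        · exact hbad x y hxs hys hxy hxW hyW (by tauto)
        · exact hbad x y hxs hys hxy hxW hyW (by tauto)
        · exact hbad x z3 hxs hz3s (Ne.symm hz3x) hxW hz3W (by tauto)
        · exact hbad y z3 hys hz3s (Ne.symm hz3y) hyW hz3W (by tauto)
        · exact hbad y z3 hys hz3s (Ne.symm hz3y) hyW hz3W (by tauto)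
        · exact hbad x z3 hxs hz3s (Ne.symm hz3x) hxW hz3W (by tauto)
        · exact hbad x y hxs hys hxy hxW hyW (by tauto)
        · exact hbad x y hxs hys hxy hxW hyW (by tauto)
      · have huc : u ∈ Wᶜ := Finset.mem_compl.mpr huW
        have h2' : 1 < (Wᶜ.erase u).card := by
          rw [Finset.card_erase_of_mem huc]; omega
        obtain ⟨x, hx, y, hy, hxy⟩ := Finset.one_lt_card.mp h2'
        have hxu : x ≠ u := (Finset.mem_erase.mp hx).1
        have hyu : y ≠ u := (Finset.mem_erase.mp hy).1
        have hxW : x ∉ W := Finset.mem_compl.mp (Finset.mem_erase.mp hx).2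
        have hyW : y ∉ W := Finset.mem_compl.mp (Finset.mem_erase.mp hy).2
        have hxs : x ∈ s := by by_contra h'; exact hxu (hmemu x h')
        have hys : y ∈ s := by by_contra h'; exact hyu (hmemu y h')
        obtain ⟨w, hwW, hne⟩ := hres x y hxW hyW (hadj_s x hxs y hys hxy)
        apply hne
        have hwx : w ≠ x := by rintro rfl; exact hxW hwW
        have hwy : w ≠ y := by rintro rfl; exact hyW hwW
        have hwu : w ≠ u := by rintro rfl; exact huW hwW
        have hws : w ∈ s := by by_contra h'; exact hwu (hmemu w h')
        rw [dist_eq_one_iff_adj.mpr (hadj_s x hxs w hws hwx.symm),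
          dist_eq_one_iff_adj.mpr (hadj_s y hys w hws hwy.symm)]
    -- upper bound
    obtain ⟨x0, hx0s, hx0z⟩ :=
      Finset.exists_mem_ne (by rw [hscard]; omega : 1 < s.card) z
    have hzW : z ∈ s.erase x0 := Finset.mem_erase.mpr ⟨fun h' => hx0z h'.symm, hzs⟩
    have hres0 : IsLocalResolvingSet G (s.erase x0) := by
      intro p q hp hq hadj
      have hmem' : ∀ r : V, r ∉ s.erase x0 → r = x0 ∨ r = u := by
        intro r hr
        by_cases hrs : r ∈ s
        · left; by_contra h'; exact hr (Finset.mem_erase.mpr ⟨h', hrs⟩)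
        · right; exact hmemu r hrs
      have hNx0z : Nc G x0 z := Or.inr (hadj_s x0 hx0s z hzs hx0z)
      have hNuz : ¬ Nc G u z := by
        rintro (rfl | h')
        · exact hus hzs
        · exact hz h'
      rcases hmem' p hp with hp' | hp' <;> rcases hmem' q hq with hq' | hq' <;>
        rw [hp', hq'] at hadj ⊢
      · exact absurd hadj (G.loopless.irrefl _)
      · exact ⟨z, hzW, resolve hconn hNx0z hNuz⟩
      · exact ⟨z, hzW, (resolve hconn hNx0z hNuz).symm⟩
      · exact absurd hadj (G.loopless.irrefl _)
    have hcard0 : (s.erase x0).card = Fintype.card V - 2 := by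
      rw [Finset.card_erase_of_mem hx0s, hscard]; omega
    unfold localDim
    exact le_antisymm (Nat.sInf_le ⟨s.erase x0, hres0, hcard0⟩) (le_csInf hSne hlower)
end

section
/- For a connected graph G with n(G) ≥ 3, the local metric dimension of G equals 1 if and only if G is bipartite. -/
open SimpleGraph

variable {V : Type*}

open scoped Fin.NatCast

lemma walk_parity {G : SimpleGraph V} (c : G.Coloring (Fin 2)) {u w : V}
    (p : G.Walk u w) : (p.length : Fin 2) = c u + c w := by
  induction p with
  | nil => simpa using (by decide : ∀ x : Fin 2, 0 = x + x) _
  | cons h p ih =>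
      simp only [SimpleGraph.Walk.length_cons, Nat.cast_add, Nat.cast_one, ih]
      exact (by decide : ∀ a b d : Fin 2, a ≠ b → b + d + 1 = a + d) _ _ _ (c.valid h)


/-- For a connected graph `G` with `n(G) ≥ 3`, `dim_l(G) = 1` iff `G` is bipartite. -/
theorem stmt_3 [Fintype V] (G : SimpleGraph V) (hn : 3 ≤ Fintype.card V)
    (hconn : G.Connected) :
    localDim G = 1 ↔ G.Colorable 2 := by
  have hne : Nonempty V := Fintype.card_pos_iff.mp (by omega)
  constructor
  · -- localDim = 1 → bipartite
    intro h1
    have hS : {k | ∃ W : Finset V, IsLocalResolvingSet G W ∧ W.card = k}.Nonempty :=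
      ⟨(Finset.univ : Finset V).card, Finset.univ,
        fun u v hu _ _ => absurd (Finset.mem_univ u) hu, rfl⟩
    have hmem := Nat.sInf_mem hS
    rw [show sInf _ = localDim G from rfl, h1] at hmem
    obtain ⟨W, hW, hcard⟩ := hmem
    obtain ⟨w, rfl⟩ := Finset.card_eq_one.mp hcard
    refine ⟨⟨fun v => (G.dist v w : Fin 2), ?_⟩⟩
    intro u v huv
    simp only [top_adj]
    show (G.dist u w : Fin 2) ≠ (G.dist v w : Fin 2)
    by_cases hu : u = w
    · have hv1 : G.dist v w = 1 := dist_eq_one_iff_adj.mpr (hu ▸ huv).symm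
      rw [hu, G.dist_self, hv1]; decide
    by_cases hv : v = w
    · have hu1 : G.dist u w = 1 := dist_eq_one_iff_adj.mpr (hv ▸ huv)
      rw [hv, G.dist_self, hu1]; decide
    obtain ⟨x, hx, hd⟩ := hW u v (by simp [hu]) (by simp [hv]) huv
    rw [Finset.mem_singleton] at hx; rw [hx] at hd; clear hx
    have h1' : G.dist u v = 1 := dist_eq_one_iff_adj.mpr huv
    have t1 : G.dist u w ≤ G.dist v w + 1 := by
      have := hconn.dist_triangle (u := u) (v := v) (w := w); omega
    have t2 : G.dist v w ≤ G.dist u w + 1 := by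
      have h1'' : G.dist v u = 1 := dist_eq_one_iff_adj.mpr huv.symm
      have := hconn.dist_triangle (u := v) (v := u) (w := w); omega
    have hcase : G.dist u w = G.dist v w + 1 ∨ G.dist v w = G.dist u w + 1 := by omega
    rcases hcase with h | h
    · rw [h]; push_cast; exact (by decide : ∀ a : Fin 2, a + 1 ≠ a) _
    · rw [h]; push_cast; exact (by decide : ∀ a : Fin 2, a ≠ a + 1) _
  · -- bipartite → localDim = 1
    intro hc
    obtain ⟨c⟩ := hc
    obtain ⟨w⟩ := hne
    have h1 : (1 : ℕ) ∈ {k | ∃ W : Finset V, IsLocalResolvingSet G W ∧ W.card = k} := by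
      refine ⟨{w}, ?_, Finset.card_singleton w⟩
      intro u v hu hv huv
      refine ⟨w, Finset.mem_singleton_self w, fun heq => ?_⟩
      obtain ⟨p, hp⟩ := (hconn u w).exists_walk_length_eq_dist
      obtain ⟨q, hq⟩ := (hconn v w).exists_walk_length_eq_dist
      have pu := walk_parity c p
      have pv := walk_parity c q
      rw [hp, heq, ← hq, pv] at pu
      have hcv := c.valid huv
      exact (by decide : ∀ a b d : Fin 2, b + d = a + d → a ≠ b → False)
        (c u) (c v) (c w) pu hcv
    have h0 : (0 : ℕ) ∉ {k | ∃ W : Finset V, IsLocalResolvingSet G W ∧ W.card = k} := by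
      rintro ⟨W, hW, hcard⟩
      rw [Finset.card_eq_zero] at hcard; subst hcard
      obtain ⟨u, v, huv⟩ : ∃ u v, G.Adj u v := by
        obtain ⟨u, v, huv⟩ := Fintype.exists_pair_of_one_lt_card (α := V) (by omega)
        obtain ⟨p, hp⟩ := (hconn u v).exists_walk_length_eq_dist
        cases p with
        | nil => exact absurd rfl huv
        | cons h _ => exact ⟨_, _, h⟩
      obtain ⟨x, hx, -⟩ := hW u v (Finset.notMem_empty u) (Finset.notMem_empty v) huv
      exact Finset.notMem_empty x hx
    have hpos : localDim G ≠ 0 := fun h => h0 (h ▸ Nat.sInf_mem ⟨1, h1⟩)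
    exact le_antisymm (Nat.sInf_le h1) (Nat.one_le_iff_ne_zero.mpr hpos)
end

section
/- If G is a connected graph with clique number ω(G) = n(G) - 3, then n(G) - 8 ≤ dim_l(G) ≤ n(G) - 3. -/
open SimpleGraph

variable {V : Type*}

section Aux
open Finset


private lemma aux_closed_reach {G : SimpleGraph V} {A : Set V}
    (hA : ∀ x y, x ∈ A → G.Adj x y → y ∈ A)
    {u v : V} (h : G.Reachable u v) (hu : u ∈ A) : v ∈ A := by
  obtain ⟨w⟩ := h
  induction w with
  | nil => exact hu
  | cons hadj p ih => exact ih (hA _ _ hu hadj)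

/-- the pair condition -/
private def Pp (G : SimpleGraph V) (T : Finset V) (u v : V) : Prop :=
  G.Adj u v → ∃ w, w ∉ T ∧ ((G.Adj u w ∧ ¬G.Adj v w) ∨ (¬G.Adj u w ∧ G.Adj v w))

private lemma Pp.swap {G : SimpleGraph V} {T : Finset V} {u v : V}
    (h : Pp G T u v) : Pp G T v u := by
  intro hadj
  obtain ⟨w, hw, h1 | h2⟩ := h hadj.symm
  exacts [⟨w, hw, Or.inr ⟨h1.2, h1.1⟩⟩, ⟨w, hw, Or.inl ⟨h2.2, h2.1⟩⟩]

private lemma Pp.of_not_adj {G : SimpleGraph V} {T : Finset V} {u v : V}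
    (h : ¬ G.Adj u v) : Pp G T u v := fun hadj => absurd hadj h

private lemma of_three [DecidableEq V] {G : SimpleGraph V} {t1 t2 t3 : V}
    (h12 : Pp G {t1, t2, t3} t1 t2) (h13 : Pp G {t1, t2, t3} t1 t3)
    (h23 : Pp G {t1, t2, t3} t2 t3) :
    ∀ u ∈ ({t1, t2, t3} : Finset V), ∀ v ∈ ({t1, t2, t3} : Finset V),
      Pp G {t1, t2, t3} u v := by
  intro u hu v hv
  simp only [Finset.mem_insert, Finset.mem_singleton] at hu hv
  rcases hu with rfl | rfl | rfl <;> rcases hv with rfl | rfl | rfl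
  exacts [Pp.of_not_adj (G.irrefl), h12, h13, h12.swap, Pp.of_not_adj (G.irrefl), h23,
    h13.swap, h23.swap, Pp.of_not_adj (G.irrefl)]

private lemma triple_resolving [Fintype V] [DecidableEq V] {G : SimpleGraph V} {T : Finset V}
    (hT : ∀ u ∈ T, ∀ v ∈ T, Pp G T u v) : IsLocalResolvingSet G Tᶜ := by
  intro u v hu hv hadj
  rw [Finset.mem_compl, not_not] at hu hv
  obtain ⟨w, hwT, h⟩ := hT u hu v hv hadj
  refine ⟨w, Finset.mem_compl.2 hwT, ?_⟩
  rcases h with ⟨h1, h2⟩ | ⟨h1, h2⟩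
  · rw [dist_eq_one_iff_adj.2 h1]
    exact fun hh => h2 (dist_eq_one_iff_adj.1 hh.symm)
  · rw [dist_eq_one_iff_adj.2 h2]
    exact fun hh => h1 (dist_eq_one_iff_adj.1 hh)

private lemma exists_good_triple [Fintype V] [DecidableEq V] {G : SimpleGraph V}
    (hconn : G.Connected) (hw : G.cliqueNum = Fintype.card V - 3)
    (hn : 4 ≤ Fintype.card V) :
    ∃ T : Finset V, T.card = 3 ∧ ∀ u ∈ T, ∀ v ∈ T, Pp G T u v := by
  classical
  obtain ⟨C, hC⟩ := G.exists_isNClique_cliqueNum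
  rw [hw] at hC
  have hCcard : C.card = Fintype.card V - 3 := hC.2
  have hclique : ∀ {x y : V}, x ∈ C → y ∈ C → x ≠ y → G.Adj x y :=
    fun hx hy hxy => hC.1 hx hy hxy
  have hbound : ∀ D : Finset V, G.IsClique ↑D → D.card ≤ Fintype.card V - 3 := by
    intro D hD
    have := @SimpleGraph.IsClique.card_le_cliqueNum _ G _ D hD
    rwa [hw] at this
  have hScard : (Cᶜ : Finset V).card = 3 := by
    rw [Finset.card_compl, hCcard]; omega
  have O1 : ∀ u ∉ C, ∃ x ∈ C, ¬ G.Adj u x := by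
    intro u hu
    by_contra h
    push_neg at h
    have hcl : G.IsClique ↑(insert u C) := by
      rw [Finset.coe_insert]
      exact hC.1.insert (fun b hb _ => h b hb)
    have := hbound _ hcl
    rw [Finset.card_insert_of_notMem hu, hCcard] at this
    omega
  set N : V → Finset V := fun u => C.filter (fun x => G.Adj u x) with hN
  have memN : ∀ {a z : V}, z ∈ N a ↔ z ∈ C ∧ G.Adj a z := fun {a z} => Finset.mem_filter
  by_cases hcase : ∀ u ∈ (Cᶜ : Finset V), ∀ v ∈ (Cᶜ : Finset V), G.Adj u v → N u ≠ N v
  · -- Case 1 : T = Cᶜ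
    refine ⟨Cᶜ, hScard, ?_⟩
    intro u hu v hv hadj
    have hne := hcase u hu v hv hadj
    have hex : ∃ x, (x ∈ N u ∧ x ∉ N v) ∨ (x ∉ N u ∧ x ∈ N v) := by
      by_contra hx
      push_neg at hx
      exact hne (Finset.ext fun x => by have := hx x; tauto)
    obtain ⟨x, hx⟩ := hex
    rcases hx with ⟨h1, h2⟩ | ⟨h1, h2⟩
    · have h1' := memN.1 h1
      refine ⟨x, by simp [Finset.mem_compl, h1'.1], Or.inl ⟨h1'.2, fun hvx => h2 (memN.2 ⟨h1'.1, hvx⟩)⟩⟩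
    · have h2' := memN.1 h2
      refine ⟨x, by simp [Finset.mem_compl, h2'.1], Or.inr ⟨fun hux => h1 (memN.2 ⟨h2'.1, hux⟩), h2'.2⟩⟩
  · -- Case 2
    push_neg at hcase
    obtain ⟨u, hu, v, hv, hadj, hNuv⟩ := hcase
    have huC : u ∉ C := Finset.mem_compl.1 hu
    have hvC : v ∉ C := Finset.mem_compl.1 hv
    have huv : u ≠ v := hadj.ne
    -- third vertex t
    have htex : ((Cᶜ : Finset V) \ {u, v}).Nonempty := by
      rw [← Finset.card_pos]
      have h1 : ({u, v} : Finset V).card ≤ 2 := Finset.card_insert_le _ _ |>.trans (by simp)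
      have h2 := Finset.le_card_sdiff ({u, v} : Finset V) (Cᶜ : Finset V)
      omega
    obtain ⟨t, ht⟩ := htex
    rw [Finset.mem_sdiff, Finset.mem_insert, Finset.mem_singleton] at ht
    obtain ⟨htS, htuv⟩ := ht
    have htC : t ∉ C := Finset.mem_compl.1 htS
    have htu : t ≠ u := fun h => htuv (Or.inl h)
    have htv : t ≠ v := fun h => htuv (Or.inr h)
    obtain ⟨x, hxC, hxu⟩ := O1 u huC
    have hxv : ¬ G.Adj v x := by
      intro h
      have : x ∈ N v := memN.2 ⟨hxC, h⟩
      rw [← hNuv] at this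
      exact hxu (memN.1 this).2
    -- generic Pp for pairs (x', t) with x' ∈ C
    have Pxt : ∀ {x' : V} {T : Finset V}, x' ∈ C → (∀ y ∈ C, y ≠ x' → y ∉ T) → Pp G T x' t := by
      intro x' T hx'C hTy hadj'
      obtain ⟨y, hyC, hyt⟩ := O1 t htC
      have hyx' : y ≠ x' := by
        intro h; subst h; exact hyt hadj'.symm
      exact ⟨y, hTy y hyC hyx', Or.inl ⟨hclique hx'C hyC (Ne.symm hyx'), hyt⟩⟩
    by_cases hut : G.Adj u t
    · by_cases hvt : G.Adj v t
      · by_cases hNt : N t = N u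
        · -- Subcase D : triangle of twins
          have hvadj : ∀ z ∈ N u, G.Adj v z := by
            intro z hz; rw [hNuv] at hz; exact (memN.1 hz).2
          have htadj : ∀ z ∈ N u, G.Adj t z := by
            intro z hz; rw [← hNt] at hz; exact (memN.1 hz).2
          have huadj : ∀ z ∈ N u, G.Adj u z := fun z hz => (memN.1 hz).2
          have hNsub : N u ⊆ C := Finset.filter_subset _ _
          have huN : u ∉ N u := fun h => huC (hNsub h)
          have hvN : v ∉ N u := fun h => hvC (hNsub h)
          have htN : t ∉ N u := fun h => htC (hNsub h)
          have hDcl : G.IsClique ↑(insert u (insert v (insert t (N u)))) := by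
            intro a ha b hb hne
            simp only [Finset.coe_insert, Set.mem_insert_iff, Finset.mem_coe] at ha hb
            rcases ha with rfl | rfl | rfl | ha <;> rcases hb with rfl | rfl | rfl | hb
            · exact absurd rfl hne
            · exact hadj
            · exact hut
            · exact huadj _ hb
            · exact hadj.symm
            · exact absurd rfl hne
            · exact hvt
            · exact hvadj _ hb
            · exact hut.symm
            · exact hvt.symm
            · exact absurd rfl hne
            · exact htadj _ hb
            · exact (huadj _ ha).symm
            · exact (hvadj _ ha).symm
            · exact (htadj _ ha).symm
            · exact hclique (hNsub ha) (hNsub hb) hne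
          have hDcard : 3 + (N u).card ≤ Fintype.card V - 3 := by
            have := hbound _ hDcl
            rw [Finset.card_insert_of_notMem (by simp [huv, htu.symm, huN]),
              Finset.card_insert_of_notMem (by simp [htv.symm, hvN]),
              Finset.card_insert_of_notMem htN] at this
            omega
          have hCN : 2 ≤ (C \ N u).card := by
            have h1 : (C \ N u).card = C.card - (N u).card := Finset.card_sdiff_of_subset hNsub
            have h2 : (N u).card ≤ C.card := Finset.card_le_card hNsub
            omega
          obtain ⟨q, hq, q', hq', hqq'⟩ := (Finset.one_lt_card (s := C \ N u)).1 (by omega)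
          rw [Finset.mem_sdiff] at hq hq'
          have hNne : (N u).Nonempty := by
            rw [Finset.nonempty_iff_ne_empty]
            intro hNe
            have hSeq : ({u, v, t} : Finset V) = Cᶜ := by
              apply Finset.eq_of_subset_of_card_le
              · intro z hz
                simp only [Finset.mem_insert, Finset.mem_singleton] at hz
                rcases hz with rfl | rfl | rfl
                exacts [hu, hv, htS]
              · rw [hScard,
                  Finset.card_eq_three.2 ⟨u, v, t, huv, Ne.symm htu, Ne.symm htv, rfl⟩]
            have hclosed : ∀ a b : V, a ∈ ({u, v, t} : Set V) → G.Adj a b → b ∈ ({u, v, t} : Set V) := by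
              intro a b ha hab
              by_cases hbC : b ∈ C
              · exfalso
                rcases ha with rfl | rfl | rfl
                · exact (Finset.notMem_empty b) (hNe ▸ memN.2 ⟨hbC, hab⟩)
                · exact (Finset.notMem_empty b) (hNe ▸ hNuv ▸ memN.2 ⟨hbC, hab⟩)
                · exact (Finset.notMem_empty b) (hNe ▸ hNt ▸ memN.2 ⟨hbC, hab⟩)
              · have : b ∈ (Cᶜ : Finset V) := Finset.mem_compl.2 hbC
                rw [← hSeq] at this
                simpa using this
            have hCne : C.Nonempty := by
              rw [← Finset.card_pos, hCcard]; omega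
            obtain ⟨x0, hx0⟩ := hCne
            have := aux_closed_reach hclosed (hconn.preconnected u x0) (by simp)
            rcases this with rfl | rfl | rfl
            exacts [huC hx0, hvC hx0, htC hx0]
          obtain ⟨p, hp⟩ := hNne
          have hpC : p ∈ C := hNsub hp
          have hup : u ≠ p := fun h => huC (h ▸ hpC)
          have huq : u ≠ q := fun h => huC (h ▸ hq.1)
          have hpq : p ≠ q := fun h => hq.2 (h ▸ hp)
          refine ⟨{u, p, q}, Finset.card_eq_three.2 ⟨u, p, q, hup, huq, hpq, rfl⟩,
            of_three ?_ ?_ ?_⟩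
          · -- Pp u p
            intro _
            refine ⟨q', ?_, Or.inr ⟨fun h => hq'.2 (memN.2 ⟨hq'.1, h⟩),
              hclique hpC hq'.1 (fun h => hq'.2 (h ▸ hp))⟩⟩
            simp only [Finset.mem_insert, Finset.mem_singleton]
            push_neg
            exact ⟨fun h => huC (h ▸ hq'.1), fun h => hq'.2 (h ▸ hp), fun h => hqq' h.symm⟩
          · -- Pp u q
            exact Pp.of_not_adj (fun h => hq.2 (memN.2 ⟨hq.1, h⟩))
          · -- Pp p q
            intro _
            refine ⟨v, ?_, Or.inl ⟨(hvadj p hp).symm, fun h => (fun hh => hq.2 (hNuv ▸ memN.2 ⟨hq.1, hh⟩)) h.symm⟩⟩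
            simp only [Finset.mem_insert, Finset.mem_singleton]
            push_neg
            exact ⟨huv.symm, fun h => hvC (h ▸ hpC), fun h => hvC (h ▸ hq.1)⟩
        · -- Subcase C : N t ≠ N u
          have key : ∃ x' z : V, x' ∈ C ∧ ¬ G.Adj u x' ∧ z ∈ C ∧ z ≠ x' ∧
              ((G.Adj u z ∧ ¬ G.Adj t z) ∨ (¬ G.Adj u z ∧ G.Adj t z)) := by
            by_cases hz1 : ∃ z ∈ C, G.Adj u z ∧ ¬ G.Adj t z
            · obtain ⟨z, hzC, hzu, hzt⟩ := hz1
              exact ⟨x, z, hxC, hxu, hzC, fun h => hxu (h ▸ hzu), Or.inl ⟨hzu, hzt⟩⟩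
            · push_neg at hz1
              have hsub : N u ⊆ N t := by
                intro z hz
                obtain ⟨hzC, hzu⟩ := memN.1 hz
                exact memN.2 ⟨hzC, hz1 z hzC hzu⟩
              have hss : ∃ z ∈ N t, z ∉ N u := by
                by_contra hcon
                push_neg at hcon
                exact hNt (Finset.Subset.antisymm hcon hsub)
              obtain ⟨z, hzNt, hzNu⟩ := hss
              obtain ⟨hzC, hzt⟩ := memN.1 hzNt
              have hzu : ¬ G.Adj u z := fun h => hzNu (memN.2 ⟨hzC, h⟩)
              have hx' : ∃ x' ∈ C, ¬ G.Adj u x' ∧ x' ≠ z := by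
                by_contra hcon
                push_neg at hcon
                have hNtC : N t = C := by
                  apply Finset.Subset.antisymm (Finset.filter_subset _ _)
                  intro y hyC
                  by_cases hyu : G.Adj u y
                  · exact hsub (memN.2 ⟨hyC, hyu⟩)
                  · have := hcon y hyC hyu
                    subst this
                    exact hzNt
                obtain ⟨y, hyC, hyt⟩ := O1 t htC
                rw [← hNtC] at hyC
                exact hyt (memN.1 hyC).2
              obtain ⟨x', hx'C, hx'u, hx'z⟩ := hx'
              exact ⟨x', z, hx'C, hx'u, hzC, fun h => hx'z h.symm, Or.inr ⟨hzu, hzt⟩⟩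
          obtain ⟨x', z, hx'C, hx'u, hzC, hzx', hzor⟩ := key
          have hx'u' : x' ≠ u := fun h => huC (h ▸ hx'C)
          have hx't : x' ≠ t := fun h => htC (h ▸ hx'C)
          have hut' : u ≠ t := Ne.symm htu
          refine ⟨{x', u, t}, Finset.card_eq_three.2 ⟨x', u, t, hx'u', hx't, hut', rfl⟩,
            of_three ?_ ?_ ?_⟩
          · exact Pp.of_not_adj (fun h => hx'u h.symm)
          · refine Pxt hx'C ?_
            intro y hyC hyx'
            simp only [Finset.mem_insert, Finset.mem_singleton]
            push_neg
            exact ⟨hyx', fun h => huC (h ▸ hyC), fun h => htC (h ▸ hyC)⟩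
          · intro _
            refine ⟨z, ?_, hzor⟩
            simp only [Finset.mem_insert, Finset.mem_singleton]
            push_neg
            exact ⟨hzx', fun h => huC (h ▸ hzC), fun h => htC (h ▸ hzC)⟩
      · -- Subcase B : Adj u t, ¬ Adj v t
        have hx'u' : x ≠ u := fun h => huC (h ▸ hxC)
        have hx't : x ≠ t := fun h => htC (h ▸ hxC)
        refine ⟨{x, u, t}, Finset.card_eq_three.2 ⟨x, u, t, hx'u', hx't, Ne.symm htu, rfl⟩,
          of_three ?_ ?_ ?_⟩
        · exact Pp.of_not_adj (fun h => hxu h.symm)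
        · refine Pxt hxC ?_
          intro y hyC hyx'
          simp only [Finset.mem_insert, Finset.mem_singleton]
          push_neg
          exact ⟨hyx', fun h => huC (h ▸ hyC), fun h => htC (h ▸ hyC)⟩
        · intro _
          refine ⟨v, ?_, Or.inl ⟨hadj, fun h => hvt h.symm⟩⟩
          simp only [Finset.mem_insert, Finset.mem_singleton]
          push_neg
          exact ⟨fun h => hvC (h ▸ hxC), Ne.symm huv, Ne.symm htv⟩
    · -- Subcase A : ¬ Adj u t
      have hx'u' : x ≠ u := fun h => huC (h ▸ hxC)
      have hx't : x ≠ t := fun h => htC (h ▸ hxC)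
      refine ⟨{x, u, t}, Finset.card_eq_three.2 ⟨x, u, t, hx'u', hx't, Ne.symm htu, rfl⟩,
        of_three ?_ ?_ ?_⟩
      · exact Pp.of_not_adj (fun h => hxu h.symm)
      · refine Pxt hxC ?_
        intro y hyC hyx'
        simp only [Finset.mem_insert, Finset.mem_singleton]
        push_neg
        exact ⟨hyx', fun h => huC (h ▸ hyC), fun h => htC (h ▸ hyC)⟩
      · exact Pp.of_not_adj hut

private lemma lower_bound [Fintype V] {G : SimpleGraph V} {W : Finset V}
    (hconn : G.Connected) (hw : G.cliqueNum = Fintype.card V - 3)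
    (hn : 9 ≤ Fintype.card V) (hres : IsLocalResolvingSet G W) :
    Fintype.card V - 8 ≤ W.card := by
  classical
  obtain ⟨C, hC⟩ := G.exists_isNClique_cliqueNum
  rw [hw] at hC
  have hCcard : C.card = Fintype.card V - 3 := hC.2
  have hCne : C.Nonempty := by rw [← Finset.card_pos, hCcard]; omega
  set m : V → ℕ := fun w => C.inf' hCne (fun x => G.dist x w) with hm
  have hkey : ∀ u ∈ C, ∀ w : V, m w ≤ G.dist u w ∧ G.dist u w ≤ m w + 1 := by
    intro u hu w
    constructor
    · exact Finset.inf'_le _ hu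
    · obtain ⟨x0, hx0, hx0e⟩ := Finset.exists_mem_eq_inf' hCne (fun x => G.dist x w)
      have htri : G.dist u w ≤ G.dist u x0 + G.dist x0 w := hconn.dist_triangle
      have hd1 : G.dist u x0 ≤ 1 := by
        by_cases h : u = x0
        · subst h; simp [SimpleGraph.dist_self]
        · exact le_of_eq (dist_eq_one_iff_adj.2 (hC.1 hu hx0 h))
      have hmw : m w = G.dist x0 w := hx0e
      omega
  set f : V → ({y // y ∈ (Cᶜ ∩ W : Finset V)} → Bool) :=
    fun u w => decide (G.dist u w.1 = m w.1) with hf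
  have hinj : Set.InjOn f ↑(C \ W) := by
    intro u hu v hv hfe
    by_contra hne
    rw [Finset.mem_coe, Finset.mem_sdiff] at hu hv
    have hadj : G.Adj u v := hC.1 hu.1 hv.1 hne
    obtain ⟨w, hwW, hdne⟩ := hres u v hu.2 hv.2 hadj
    by_cases hwC : w ∈ C
    · have h1 : G.dist u w = 1 := dist_eq_one_iff_adj.2 (hC.1 hu.1 hwC (fun h => hu.2 (h ▸ hwW)))
      have h2 : G.dist v w = 1 := dist_eq_one_iff_adj.2 (hC.1 hv.1 hwC (fun h => hv.2 (h ▸ hwW)))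
      exact hdne (h1.trans h2.symm)
    · have hwmem : w ∈ (Cᶜ ∩ W : Finset V) :=
        Finset.mem_inter.2 ⟨Finset.mem_compl.2 hwC, hwW⟩
      have := congrFun hfe ⟨w, hwmem⟩
      simp only [hf, decide_eq_decide] at this
      have h1 := hkey u hu.1 w
      have h2 := hkey v hv.1 w
      omega
  have hcard1 : (C \ W).card ≤ 2 ^ (Cᶜ ∩ W : Finset V).card := by
    have h := Finset.card_le_card_of_injOn f (fun a _ => Finset.mem_univ (f a)) hinj
    rwa [Finset.card_univ, Fintype.card_fun, Fintype.card_bool, Fintype.card_coe] at h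
  have hs3 : (Cᶜ ∩ W : Finset V).card ≤ 3 := by
    have h1 : (Cᶜ ∩ W : Finset V).card ≤ (Cᶜ : Finset V).card :=
      Finset.card_le_card (Finset.inter_subset_left)
    have h2 : (Cᶜ : Finset V).card = Fintype.card V - (Fintype.card V - 3) := by
      rw [Finset.card_compl, hCcard]
    omega
  have hWsplit : (W ∩ C).card + (W \ C).card = W.card := Finset.card_inter_add_card_sdiff W C
  have hCsplit : (C ∩ W).card + (C \ W).card = C.card := Finset.card_inter_add_card_sdiff C W
  have hcomm : (C ∩ W) = (W ∩ C) := Finset.inter_comm C W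
  have hcomm2 : (W \ C) = (Cᶜ ∩ W : Finset V) := by
    ext a; simp [Finset.mem_sdiff, Finset.mem_inter, Finset.mem_compl, and_comm]
  rw [hcomm] at hCsplit
  rw [hcomm2] at hWsplit
  set s := (Cᶜ ∩ W : Finset V).card with hsdef
  clear_value s
  have hscases : s = 0 ∨ s = 1 ∨ s = 2 ∨ s = 3 := by omega
  rcases hscases with rfl | rfl | rfl | rfl <;> norm_num at hcard1 ⊢ <;> omega

end Aux

/-- If `G` is connected with `ω(G) = n(G) - 3`, then `n(G) - 8 ≤ dim_l(G) ≤ n(G) - 3`. -/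
theorem stmt_9 [Fintype V] (G : SimpleGraph V) (hconn : G.Connected)
    (hw : G.cliqueNum = Fintype.card V - 3) :
    Fintype.card V - 8 ≤ localDim G ∧ localDim G ≤ Fintype.card V - 3 := by
  classical
  have hne : Nonempty V := hconn.nonempty
  have hn4 : 4 ≤ Fintype.card V := by
    by_contra h
    push_neg at h
    obtain ⟨v⟩ := hne
    have h1 : G.IsClique ↑({v} : Finset V) := by simp [SimpleGraph.isClique_iff]
    have := @SimpleGraph.IsClique.card_le_cliqueNum _ G _ {v} h1
    rw [hw, Finset.card_singleton] at this
    omega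
  constructor
  · by_cases h9 : 9 ≤ Fintype.card V
    · apply le_csInf
      · exact ⟨Finset.univ.card, Finset.univ,
          fun u v hu _ _ => absurd (Finset.mem_univ u) hu, rfl⟩
      · rintro k ⟨W, hres, rfl⟩
        exact lower_bound hconn hw h9 hres
    · have h0 : Fintype.card V - 8 = 0 := by omega
      rw [h0]; exact Nat.zero_le _
  · obtain ⟨T, hT3, hTgood⟩ := exists_good_triple hconn hw hn4
    apply Nat.sInf_le
    exact ⟨Tᶜ, triple_resolving hTgood, by rw [Finset.card_compl, hT3]⟩
end

section
/- If G is a connected graph with n(G) ≥ 5 and ω(G) = n(G) - 2, then n(G) - 4 ≤ dim_l(G) ≤ n(G) - 3; moreover dim_l(G) = n(G) - 3 if and only if G is {Γ_1,Γ_2}-free, and dim_l(G) = n(G) - 4 if and only if G contains an induced subgraph isomorphic to Γ_1 or Γ_2. -/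
open SimpleGraph

variable {V : Type*}

section LmdAux

open Finset

lemma lmd_localDim_le [Fintype V] {G : SimpleGraph V} {W : Finset V}
    (h : IsLocalResolvingSet G W) : localDim G ≤ W.card :=
  Nat.sInf_le ⟨W, h, rfl⟩

lemma lmd_le_localDim [Fintype V] {G : SimpleGraph V} {k : ℕ}
    (h : ∀ W : Finset V, IsLocalResolvingSet G W → k ≤ W.card) : k ≤ localDim G := by
  have hne : {m | ∃ W : Finset V, IsLocalResolvingSet G W ∧ W.card = m}.Nonempty :=
    ⟨(univ : Finset V).card, univ, fun u v hu _ _ => absurd (mem_univ u) hu, rfl⟩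
  obtain ⟨W, hW, hc⟩ := Nat.sInf_mem hne
  rw [localDim, ← hc]
  exact h W hW

lemma lmd_dist_ne_one {G : SimpleGraph V} {u v : V} (h : ¬ G.Adj u v) :
    G.dist u v ≠ 1 := fun hd => h (dist_eq_one_iff_adj.mp hd)

lemma lmd_res_one [Fintype V] {G : SimpleGraph V} {W : Finset V} {u v w : V}
    (hw : w ∈ W) (h1 : G.Adj u w) (h2 : ¬ G.Adj v w) :
    (∃ w ∈ W, G.dist u w ≠ G.dist v w) ∧ (∃ w ∈ W, G.dist v w ≠ G.dist u w) := by
  have hu1 : G.dist u w = 1 := dist_eq_one_iff_adj.mpr h1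
  have hv1 : G.dist v w ≠ 1 := lmd_dist_ne_one h2
  exact ⟨⟨w, hw, by omega⟩, ⟨w, hw, by omega⟩⟩

lemma lmd_dist_eq_two {G : SimpleGraph V} {u x q : V} (h1 : ¬ G.Adj u x)
    (h2 : u ≠ x) (hq1 : G.Adj u q) (hq2 : G.Adj q x) : G.dist u x = 2 := by
  have hle : G.dist u x ≤ 2 := by
    simpa using G.dist_le (Walk.cons hq1 hq2.toWalk)
  have h0 : G.dist u x ≠ 0 := by
    rw [SimpleGraph.dist_ne_zero_iff_ne_and_reachable]
    exact ⟨h2, ⟨Walk.cons hq1 hq2.toWalk⟩⟩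
  have h1' := lmd_dist_ne_one h1
  omega

lemma lmd_dist_pendant {G : SimpleGraph V} (hconn : G.Connected) {x y u : V}
    (hN : ∀ z, G.Adj x z → z = y) (hxy : G.Adj x y) (hu : u ≠ x) :
    G.dist u x = G.dist u y + 1 := by
  have hle : G.dist u x ≤ G.dist u y + 1 := by
    calc G.dist u x ≤ G.dist u y + G.dist y x := hconn.dist_triangle
      _ = G.dist u y + 1 := by rw [dist_eq_one_iff_adj.mpr hxy.symm]
  have hge : G.dist u y + 1 ≤ G.dist u x := by
    obtain ⟨p, hp⟩ := (hconn x u).exists_walk_length_eq_dist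
    cases p with
    | nil => exact absurd rfl (Ne.symm hu)
    | cons h q =>
      have h2 : G.dist y u ≤ q.length := (hN _ h) ▸ G.dist_le q
      have hlen : q.length + 1 = G.dist x u := by simpa using hp
      have c1 : G.dist u x = G.dist x u := dist_comm
      have c2 : G.dist u y = G.dist y u := dist_comm
      omega
  omega

lemma lmd_neighbors_eq {G : SimpleGraph V} {Q : Finset V} {x y : V} (hxQ : x ∉ Q)
    (hcompl : ∀ v, v ∉ Q → v = x ∨ v = y)
    (hx : ∀ q ∈ Q, ¬ G.Adj x q) : ∀ w, G.Adj x w → w = y := by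
  intro w hw
  by_cases hwQ : w ∈ Q
  · exact absurd hw (hx w hwQ)
  · rcases hcompl w hwQ with rfl | rfl
    · exact absurd hw (G.loopless.irrefl _)
    · rfl

lemma lmd_pendant_dist {G : SimpleGraph V} {Q : Finset V} {x y : V}
    (hconn : G.Connected) (hQne : Q.Nonempty)
    (hxQ : x ∉ Q) (hyQ : y ∉ Q) (hcompl : ∀ v, v ∉ Q → v = x ∨ v = y)
    (hx : ∀ q ∈ Q, ¬ G.Adj x q) :
    ∀ u ∈ Q, G.dist u x = G.dist u y + 1 := by
  have hNx := lmd_neighbors_eq hxQ hcompl hx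
  obtain ⟨u0, hu0⟩ := hQne
  have hu0x : u0 ≠ x := fun he => hxQ (he ▸ hu0)
  have hadjxy : G.Adj x y := by
    obtain ⟨p⟩ := hconn x u0
    cases p with
    | nil => exact absurd rfl hu0x.symm
    | cons h q => exact (hNx _ h) ▸ h
  exact fun u hu => lmd_dist_pendant hconn hNx hadjxy (fun he => hxQ (he ▸ hu))

lemma lmd_not_both_pendant {G : SimpleGraph V} {Q : Finset V} {x y : V}
    (hconn : G.Connected) (hQne : Q.Nonempty)
    (hxQ : x ∉ Q) (hyQ : y ∉ Q) (hcompl : ∀ v, v ∉ Q → v = x ∨ v = y) (hxy : x ≠ y)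
    (hx : ∀ q ∈ Q, ¬ G.Adj x q) (hy : ∀ q ∈ Q, ¬ G.Adj y q) : False := by
  obtain ⟨u, hu⟩ := hQne.exists_mem
  have e1 := lmd_pendant_dist hconn hQne hxQ hyQ hcompl hx u hu
  have e2 := lmd_pendant_dist hconn hQne hyQ hxQ
    (fun v hv => (hcompl v hv).symm) hy u hu
  omega

lemma lmd_dist_one_or_two {G : SimpleGraph V} {Q : Finset V} {z : V}
    (hQc : G.IsClique (Q : Set V)) (hzQ : z ∉ Q)
    {q0 : V} (hq0 : q0 ∈ Q) (hadj : G.Adj z q0) {u : V} (hu : u ∈ Q) :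
    G.dist u z = 1 ∨ G.dist u z = 2 := by
  by_cases h : G.Adj u z
  · exact Or.inl (dist_eq_one_iff_adj.mpr h)
  · refine Or.inr (lmd_dist_eq_two h (fun he => hzQ (he ▸ hu)) ?_ hadj.symm)
    exact hQc hu hq0 (fun he => h (he ▸ hadj.symm))

lemma lmd_vals {G : SimpleGraph V} {Q : Finset V} {z z' : V}
    (hconn : G.Connected) (hQc : G.IsClique (Q : Set V)) (hQne : Q.Nonempty)
    (hzz' : z ≠ z') (hzQ : z ∉ Q) (hz'Q : z' ∉ Q)
    (hall : ∀ v, v ∉ Q → v = z ∨ v = z') :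
    ∃ s : Finset ℕ, s.card ≤ 2 ∧ ∀ u ∈ Q, G.dist u z ∈ s := by
  classical
  by_cases hx : ∃ q0 ∈ Q, G.Adj z q0
  · obtain ⟨q0, hq0, hadj⟩ := hx
    exact ⟨{1, 2}, by decide, fun u hu => by
      rcases lmd_dist_one_or_two hQc hzQ hq0 hadj hu with h | h <;> simp [h]⟩
  · push_neg at hx
    refine ⟨{2, 3}, by decide, fun u hu => ?_⟩
    have e := lmd_pendant_dist hconn hQne hzQ hz'Q hall (fun q hq => hx q hq) u hu
    by_cases hy : ∃ q0 ∈ Q, G.Adj z' q0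
    · obtain ⟨q0, hq0, hadj⟩ := hy
      rcases lmd_dist_one_or_two hQc hz'Q hq0 hadj hu with h | h <;> simp [e, h]
    · push_neg at hy
      exact absurd (lmd_not_both_pendant hconn hQne hzQ hz'Q hall hzz'
        (fun q hq => hx q hq) (fun q hq => hy q hq)) id

lemma lmd_resolved_pair [Fintype V] {G : SimpleGraph V} {Q W : Finset V} {x y : V}
    (hW : IsLocalResolvingSet G W) (hQc : G.IsClique (Q : Set V))
    (hcompl : ∀ v, v ∉ Q → v = x ∨ v = y)
    {u v : V} (hu : u ∈ Q) (hv : v ∈ Q) (huv : u ≠ v) (huW : u ∉ W) (hvW : v ∉ W) :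
    ∃ w, (w = x ∨ w = y) ∧ w ∈ W ∧ G.dist u w ≠ G.dist v w := by
  obtain ⟨w, hwW, hdist⟩ := hW u v huW hvW (hQc hu hv huv)
  refine ⟨w, ?_, hwW, hdist⟩
  by_contra hw
  have hwQ : w ∈ Q := by
    by_contra hwQ
    exact hw (hcompl w hwQ)
  have hwu : w ≠ u := fun he => huW (he ▸ hwW)
  have hwv : w ≠ v := fun he => hvW (he ▸ hwW)
  exact hdist (by rw [dist_eq_one_iff_adj.mpr (hQc hu hwQ hwu.symm),
    dist_eq_one_iff_adj.mpr (hQc hv hwQ hwv.symm)])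

end LmdAux
section LmdConfig
open Finset
lemma lmd_embed_of_config {G : SimpleGraph V} {a b c d x y : V}
    (hab : G.Adj a b) (hac : G.Adj a c) (had : G.Adj a d)
    (hbc : G.Adj b c) (hbd : G.Adj b d) (hcd : G.Adj c d)
    (hxa : G.Adj x a) (hxb : G.Adj x b) (hxc : ¬G.Adj x c) (hxd : ¬G.Adj x d)
    (hya : G.Adj y a) (hyc : G.Adj y c) (hyb : ¬G.Adj y b) (hyd : ¬G.Adj y d)
    (nxc : x ≠ c) (nxd : x ≠ d) (nyb : y ≠ b) (nyd : y ≠ d) (nxy : x ≠ y) :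
    Nonempty (Gamma1 ↪g G) ∨ Nonempty (Gamma2 ↪g G) := by
  have nxa : x ≠ a := hxa.ne
  have nxb : x ≠ b := hxb.ne
  have nya : y ≠ a := hya.ne
  have nyc : y ≠ c := hyc.ne
  have nab : a ≠ b := hab.ne
  have nac : a ≠ c := hac.ne
  have nad : a ≠ d := had.ne
  have nbc : b ≠ c := hbc.ne
  have nbd : b ≠ d := hbd.ne
  have ncd : c ≠ d := hcd.ne
  let f : Fin 6 → V := fun i => match i with
    | 0 => a | 1 => b | 2 => c | 3 => d | 4 => x | 5 => y
  have hinj : Function.Injective f := by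
    intro i j h
    fin_cases i <;> fin_cases j <;>
      first | rfl | (exfalso; revert h; first
        | exact fun h => nab h | exact fun h => nab h.symm
        | exact fun h => nac h | exact fun h => nac h.symm
        | exact fun h => nad h | exact fun h => nad h.symm
        | exact fun h => nbc h | exact fun h => nbc h.symm
        | exact fun h => nbd h | exact fun h => nbd h.symm
        | exact fun h => ncd h | exact fun h => ncd h.symm
        | exact fun h => nxa h | exact fun h => nxa h.symm
        | exact fun h => nxb h | exact fun h => nxb h.symm
        | exact fun h => nxc h | exact fun h => nxc h.symm
        | exact fun h => nxd h | exact fun h => nxd h.symm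
        | exact fun h => nya h | exact fun h => nya h.symm
        | exact fun h => nyb h | exact fun h => nyb h.symm
        | exact fun h => nyc h | exact fun h => nyc h.symm
        | exact fun h => nyd h | exact fun h => nyd h.symm
        | exact fun h => nxy h | exact fun h => nxy h.symm)
  by_cases hxy : G.Adj x y
  · refine Or.inr ⟨⟨⟨f, hinj⟩, ?_⟩⟩
    intro u v
    fin_cases u <;> fin_cases v <;> first
      | (refine iff_of_true ?_ (by simp only [Gamma2, fromRel_adj]; decide); first
          | exact hab | exact hac | exact had | exact hbc | exact hbd | exact hcd
          | exact hxa | exact hxb | exact hya | exact hyc | exact hxy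
          | exact hab.symm | exact hac.symm | exact had.symm | exact hbc.symm
          | exact hbd.symm | exact hcd.symm | exact hxa.symm | exact hxb.symm
          | exact hya.symm | exact hyc.symm | exact hxy.symm)
      | (refine iff_of_false ?_ (by simp only [Gamma2, fromRel_adj]; decide); first
          | exact G.irrefl | exact hxc | exact hxd | exact hyb | exact hyd
          | exact fun h => hxc h.symm | exact fun h => hxd h.symm
          | exact fun h => hyb h.symm | exact fun h => hyd h.symm)
  · refine Or.inl ⟨⟨⟨f, hinj⟩, ?_⟩⟩
    intro u v
    fin_cases u <;> fin_cases v <;> first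
      | (refine iff_of_true ?_ (by simp only [Gamma1, fromRel_adj]; decide); first
          | exact hab | exact hac | exact had | exact hbc | exact hbd | exact hcd
          | exact hxa | exact hxb | exact hya | exact hyc
          | exact hab.symm | exact hac.symm | exact had.symm | exact hbc.symm
          | exact hbd.symm | exact hcd.symm | exact hxa.symm | exact hxb.symm
          | exact hya.symm | exact hyc.symm)
      | (refine iff_of_false ?_ (by simp only [Gamma1, fromRel_adj]; decide); first
          | exact G.irrefl | exact hxc | exact hxd | exact hyb | exact hyd | exact hxy
          | exact fun h => hxc h.symm | exact fun h => hxd h.symm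
          | exact fun h => hyb h.symm | exact fun h => hyd h.symm
          | exact fun h => hxy h.symm)
lemma lmd_resolving_of_config [Fintype V] [DecidableEq V] {G : SimpleGraph V} {a b c d p q : V}
    (hab : a ≠ b) (hac : a ≠ c) (had : a ≠ d) (hbc : b ≠ c) (hbd : b ≠ d) (hcd : c ≠ d)
    (hpa : p ∉ ({a,b,c,d} : Finset V)) (hqa : q ∉ ({a,b,c,d} : Finset V))
    (h1 : G.Adj a p) (h2 : G.Adj b p) (h3 : ¬ G.Adj c p) (h4 : ¬ G.Adj d p)
    (h5 : G.Adj a q) (h6 : ¬ G.Adj b q) (h7 : G.Adj c q) (h8 : ¬ G.Adj d q) :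
    ∃ W : Finset V, IsLocalResolvingSet G W ∧ W.card = Fintype.card V - 4 := by
  refine ⟨univ \ {a,b,c,d}, ?_, ?_⟩
  · intro u v hu hv hadj
    have hu' : u ∈ ({a,b,c,d} : Finset V) := by
      by_contra h; exact hu (mem_sdiff.mpr ⟨mem_univ u, h⟩)
    have hv' : v ∈ ({a,b,c,d} : Finset V) := by
      by_contra h; exact hv (mem_sdiff.mpr ⟨mem_univ v, h⟩)
    have hp : p ∈ univ \ ({a,b,c,d} : Finset V) := mem_sdiff.mpr ⟨mem_univ p, hpa⟩
    have hq : q ∈ univ \ ({a,b,c,d} : Finset V) := mem_sdiff.mpr ⟨mem_univ q, hqa⟩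
    simp only [mem_insert, mem_singleton] at hu' hv'
    have hne : u ≠ v := hadj.ne
    rcases hu' with rfl|rfl|rfl|rfl <;> rcases hv' with rfl|rfl|rfl|rfl <;>
      first
        | exact absurd rfl hne
        | exact (lmd_res_one hq h5 h6).1
        | exact (lmd_res_one hq h5 h6).2
        | exact (lmd_res_one hp h1 h3).1
        | exact (lmd_res_one hp h1 h3).2
        | exact (lmd_res_one hp h1 h4).1
        | exact (lmd_res_one hp h1 h4).2
        | exact (lmd_res_one hp h2 h3).1
        | exact (lmd_res_one hp h2 h3).2
        | exact (lmd_res_one hp h2 h4).1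
        | exact (lmd_res_one hp h2 h4).2
        | exact (lmd_res_one hq h7 h8).1
        | exact (lmd_res_one hq h7 h8).2
  · rw [card_sdiff_of_subset (subset_univ _), card_univ]
    congr 1
    rw [card_insert_of_notMem (by simp [hab, hac, had]),
        card_insert_of_notMem (by simp [hbc, hbd]),
        card_insert_of_notMem (by simp [hcd]), card_singleton]
lemma lmd_small_of_embed1 [Fintype V] [DecidableEq V] {G : SimpleGraph V}
    (f : Gamma1 ↪g G) :
    ∃ W : Finset V, IsLocalResolvingSet G W ∧ W.card = Fintype.card V - 4 := by
  have hi := f.injective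
  refine lmd_resolving_of_config (G := G) (a := f 0) (b := f 1) (c := f 2) (d := f 3)
    (p := f 4) (q := f 5)
    (by simp only [ne_eq, hi.eq_iff]; decide) (by simp only [ne_eq, hi.eq_iff]; decide)
    (by simp only [ne_eq, hi.eq_iff]; decide) (by simp only [ne_eq, hi.eq_iff]; decide)
    (by simp only [ne_eq, hi.eq_iff]; decide) (by simp only [ne_eq, hi.eq_iff]; decide)
    (by simp only [mem_insert, mem_singleton, hi.eq_iff]; decide)
    (by simp only [mem_insert, mem_singleton, hi.eq_iff]; decide)
    (by rw [f.map_adj_iff]; simp only [Gamma1, fromRel_adj]; decide)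
    (by rw [f.map_adj_iff]; simp only [Gamma1, fromRel_adj]; decide)
    (by rw [f.map_adj_iff]; simp only [Gamma1, fromRel_adj]; decide)
    (by rw [f.map_adj_iff]; simp only [Gamma1, fromRel_adj]; decide)
    (by rw [f.map_adj_iff]; simp only [Gamma1, fromRel_adj]; decide)
    (by rw [f.map_adj_iff]; simp only [Gamma1, fromRel_adj]; decide)
    (by rw [f.map_adj_iff]; simp only [Gamma1, fromRel_adj]; decide)
    (by rw [f.map_adj_iff]; simp only [Gamma1, fromRel_adj]; decide)

lemma lmd_small_of_embed2 [Fintype V] [DecidableEq V] {G : SimpleGraph V}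
    (f : Gamma2 ↪g G) :
    ∃ W : Finset V, IsLocalResolvingSet G W ∧ W.card = Fintype.card V - 4 := by
  have hi := f.injective
  refine lmd_resolving_of_config (G := G) (a := f 0) (b := f 1) (c := f 2) (d := f 3)
    (p := f 4) (q := f 5)
    (by simp only [ne_eq, hi.eq_iff]; decide) (by simp only [ne_eq, hi.eq_iff]; decide)
    (by simp only [ne_eq, hi.eq_iff]; decide) (by simp only [ne_eq, hi.eq_iff]; decide)
    (by simp only [ne_eq, hi.eq_iff]; decide) (by simp only [ne_eq, hi.eq_iff]; decide)
    (by simp only [mem_insert, mem_singleton, hi.eq_iff]; decide)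
    (by simp only [mem_insert, mem_singleton, hi.eq_iff]; decide)
    (by rw [f.map_adj_iff]; simp only [Gamma2, fromRel_adj]; decide)
    (by rw [f.map_adj_iff]; simp only [Gamma2, fromRel_adj]; decide)
    (by rw [f.map_adj_iff]; simp only [Gamma2, fromRel_adj]; decide)
    (by rw [f.map_adj_iff]; simp only [Gamma2, fromRel_adj]; decide)
    (by rw [f.map_adj_iff]; simp only [Gamma2, fromRel_adj]; decide)
    (by rw [f.map_adj_iff]; simp only [Gamma2, fromRel_adj]; decide)
    (by rw [f.map_adj_iff]; simp only [Gamma2, fromRel_adj]; decide)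
    (by rw [f.map_adj_iff]; simp only [Gamma2, fromRel_adj]; decide)
end LmdConfig
section LmdMain

open Finset

variable [Fintype V] {G : SimpleGraph V} {Q W : Finset V} {x y : V}

lemma lmd_counts [DecidableEq V] (hxQ : x ∉ Q) (hyQ : y ∉ Q) (hxy : x ≠ y) :
    (Q \ W).card + (Q ∩ W).card = Q.card ∧ (Q ∩ W).card ≤ W.card ∧
    (x ∈ W → y ∈ W → (Q ∩ W).card + 2 ≤ W.card) ∧
    (x ∈ W → (Q ∩ W).card + 1 ≤ W.card) ∧
    (y ∈ W → (Q ∩ W).card + 1 ≤ W.card) := by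
  refine ⟨card_sdiff_add_card_inter Q W, card_le_card inter_subset_right, ?_, ?_, ?_⟩
  · intro hx hy
    have hsub : insert x (insert y (Q ∩ W)) ⊆ W := by
      intro v hv
      simp only [mem_insert] at hv
      rcases hv with rfl | rfl | hv
      · exact hx
      · exact hy
      · exact (mem_inter.mp hv).2
    have h1 : (insert x (insert y (Q ∩ W))).card = (Q ∩ W).card + 2 := by
      rw [card_insert_of_notMem (by
          simp only [mem_insert, mem_inter, not_or]
          exact ⟨hxy, fun h => hxQ h.1⟩),
        card_insert_of_notMem (by simp only [mem_inter, not_and]; exact fun h => absurd h hyQ)]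
    calc (Q ∩ W).card + 2 = (insert x (insert y (Q ∩ W))).card := h1.symm
      _ ≤ W.card := card_le_card hsub
  · intro hx
    have hsub : insert x (Q ∩ W) ⊆ W := by
      intro v hv
      simp only [mem_insert] at hv
      rcases hv with rfl | hv
      · exact hx
      · exact (mem_inter.mp hv).2
    calc (Q ∩ W).card + 1 = (insert x (Q ∩ W)).card := by
          rw [card_insert_of_notMem (by simp only [mem_inter, not_and]; exact fun h => absurd h hxQ)]
      _ ≤ W.card := card_le_card hsub
  · intro hy
    have hsub : insert y (Q ∩ W) ⊆ W := by
      intro v hv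
      simp only [mem_insert] at hv
      rcases hv with rfl | hv
      · exact hy
      · exact (mem_inter.mp hv).2
    calc (Q ∩ W).card + 1 = (insert y (Q ∩ W)).card := by
          rw [card_insert_of_notMem (by simp only [mem_inter, not_and]; exact fun h => absurd h hyQ)]
      _ ≤ W.card := card_le_card hsub

/-- Lower bound `n - 4` for any local resolving set. -/
lemma lmd_LB4 (hconn : G.Connected) (hn : 5 ≤ Fintype.card V)
    (hQ : G.IsNClique (Fintype.card V - 2) Q)
    (hxy : x ≠ y) (hxQ : x ∉ Q) (hyQ : y ∉ Q)
    (hcompl : ∀ v, v ∉ Q → v = x ∨ v = y)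
    (hW : IsLocalResolvingSet G W) : Fintype.card V - 4 ≤ W.card := by
  classical
  have hQc := hQ.isClique
  have hQcard := hQ.card_eq
  have hQne : Q.Nonempty := card_pos.mp (by omega)
  obtain ⟨hc1, hc2, hc3, hc4, hc5⟩ := lmd_counts (W := W) hxQ hyQ hxy
  by_contra hcon
  have h5 : W.card + 5 ≤ Fintype.card V := by omega
  set T := Q \ W with hT
  have hTQ : ∀ u, u ∈ T → u ∈ Q := fun u hu => (mem_sdiff.mp hu).1
  have hTW : ∀ u, u ∈ T → u ∉ W := fun u hu => (mem_sdiff.mp hu).2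
  by_cases hxW : x ∈ W <;> by_cases hyW : y ∈ W
  · -- both in W : T has ≥ 5 elements, profiles injective into ≤4 values
    have hT5 : 5 ≤ T.card := by
      have := hc3 hxW hyW
      omega
    obtain ⟨sx, hsx2, hsx⟩ := lmd_vals hconn hQc hQne hxy hxQ hyQ hcompl
    obtain ⟨sy, hsy2, hsy⟩ := lmd_vals hconn hQc hQne hxy.symm hyQ hxQ
      (fun v hv => (hcompl v hv).symm)
    have hinj : Set.InjOn (fun u => (G.dist u x, G.dist u y)) (T : Set V) := by
      intro u hu v hv he
      by_contra hne
      obtain ⟨w, hwxy, hwW, hd⟩ := lmd_resolved_pair hW hQc hcompl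
        (hTQ u hu) (hTQ v hv) hne (hTW u hu) (hTW v hv)
      have he1 : G.dist u x = G.dist v x := congrArg Prod.fst he
      have he2 : G.dist u y = G.dist v y := congrArg Prod.snd he
      rcases hwxy with rfl | rfl
      · exact hd he1
      · exact hd he2
    have hmaps : ∀ u ∈ T, (G.dist u x, G.dist u y) ∈ sx ×ˢ sy := by
      intro u hu
      exact mem_product.mpr ⟨hsx u (hTQ u hu), hsy u (hTQ u hu)⟩
    have hcard := Finset.card_le_card_of_injOn _ hmaps hinj
    rw [card_product] at hcard
    nlinarith
  · -- x ∈ W, y ∉ W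
    have hT3 : 3 ≤ T.card := by
      have := hc4 hxW
      omega
    obtain ⟨sx, hsx2, hsx⟩ := lmd_vals hconn hQc hQne hxy hxQ hyQ hcompl
    have hinj : Set.InjOn (fun u => G.dist u x) (T : Set V) := by
      intro u hu v hv he
      by_contra hne
      obtain ⟨w, hwxy, hwW, hd⟩ := lmd_resolved_pair hW hQc hcompl
        (hTQ u hu) (hTQ v hv) hne (hTW u hu) (hTW v hv)
      rcases hwxy with rfl | rfl
      · exact hd he
      · exact hyW hwW
    have hcard := Finset.card_le_card_of_injOn _ (fun u hu => hsx u (hTQ u hu)) hinj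
    omega
  · -- y ∈ W, x ∉ W
    have hT3 : 3 ≤ T.card := by
      have := hc5 hyW
      omega
    obtain ⟨sy, hsy2, hsy⟩ := lmd_vals hconn hQc hQne hxy.symm hyQ hxQ
      (fun v hv => (hcompl v hv).symm)
    have hinj : Set.InjOn (fun u => G.dist u y) (T : Set V) := by
      intro u hu v hv he
      by_contra hne
      obtain ⟨w, hwxy, hwW, hd⟩ := lmd_resolved_pair hW hQc hcompl
        (hTQ u hu) (hTQ v hv) hne (hTW u hu) (hTW v hv)
      rcases hwxy with rfl | rfl
      · exact hxW hwW
      · exact hd he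
    have hcard := Finset.card_le_card_of_injOn _ (fun u hu => hsy u (hTQ u hu)) hinj
    omega
  · -- neither in W
    have hT2 : 1 < T.card := by omega
    obtain ⟨u, hu, v, hv, huv⟩ := one_lt_card.mp hT2
    obtain ⟨w, hwxy, hwW, _⟩ := lmd_resolved_pair hW hQc hcompl
      (hTQ u hu) (hTQ v hv) huv (hTW u hu) (hTW v hv)
    rcases hwxy with rfl | rfl
    · exact hxW hwW
    · exact hyW hwW

end LmdMain

section LmdUB3
open Finset
variable [Fintype V] [DecidableEq V] {G : SimpleGraph V} {Q : Finset V} {x y : V}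
lemma lmd_UB3 (hconn : G.Connected) (hn : 5 ≤ Fintype.card V)
    (hQ : G.IsNClique (Fintype.card V - 2) Q)
    (hxy : x ≠ y) (hxQ : x ∉ Q) (hyQ : y ∉ Q)
    (hcompl : ∀ v, v ∉ Q → v = x ∨ v = y)
    (hmax : ∀ s : Finset V, G.IsClique (s : Set V) → s.card ≤ Fintype.card V - 2) :
    ∃ W : Finset V, IsLocalResolvingSet G W ∧ W.card = Fintype.card V - 3 := by
  classical
  have hQc : G.IsClique (Q : Set V) := hQ.isClique
  have hQcard : Q.card = Fintype.card V - 2 := hQ.card_eq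
  have hQ3 : 3 ≤ Q.card := by omega
  -- not all of Q adjacent to x
  have notAll : ∀ z, z ∉ Q → ∃ q ∈ Q, ¬ G.Adj z q := by
    intro z hzQ
    by_contra hall
    push_neg at hall
    have hcl : G.IsClique ((insert z Q : Finset V) : Set V) := by
      rw [coe_insert]
      exact hQc.insert (fun b hb _ => hall b hb)
    have := hmax _ hcl
    rw [card_insert_of_notMem hzQ] at this
    omega
  -- helper: resolving set with complement {x, y, u0}
  have main12 : ∀ u0 ∈ Q,
      (G.Adj x y → ∃ w0 ∈ Q, w0 ≠ u0 ∧ G.dist x w0 ≠ G.dist y w0) →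
      ∃ W : Finset V, IsLocalResolvingSet G W ∧ W.card = Fintype.card V - 3 := by
    intro u0 hu0 hres
    have hxu0 : x ≠ u0 := fun he => hxQ (he ▸ hu0)
    have hyu0 : y ≠ u0 := fun he => hyQ (he ▸ hu0)
    refine ⟨univ \ {x, y, u0}, ?_, ?_⟩
    · intro u v hu hv hadj
      have hu' : u ∈ ({x, y, u0} : Finset V) := by
        by_contra h; exact hu (mem_sdiff.mpr ⟨mem_univ u, h⟩)
      have hv' : v ∈ ({x, y, u0} : Finset V) := by
        by_contra h; exact hv (mem_sdiff.mpr ⟨mem_univ v, h⟩)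
      simp only [mem_insert, mem_singleton] at hu' hv'
      have hWmem : ∀ w : V, w ∈ Q → w ≠ u0 → w ∈ univ \ ({x, y, u0} : Finset V) := by
        intro w hw hwne
        refine mem_sdiff.mpr ⟨mem_univ w, ?_⟩
        simp only [mem_insert, mem_singleton, not_or]
        exact ⟨fun he => hxQ (he ▸ hw), fun he => hyQ (he ▸ hw), hwne⟩
      -- resolvers for the pairs
      have hresxu : G.Adj x u0 → (∃ w ∈ univ \ ({x,y,u0} : Finset V), G.dist x w ≠ G.dist u0 w)
          ∧ (∃ w ∈ univ \ ({x,y,u0} : Finset V), G.dist u0 w ≠ G.dist x w) := by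
        intro h
        obtain ⟨q, hq, hnadj⟩ := notAll x hxQ
        have hqu0 : q ≠ u0 := fun he => hnadj (he ▸ h)
        have h1 : G.Adj u0 q := hQc hu0 hq (Ne.symm hqu0)
        have := lmd_res_one (hWmem q hq hqu0) h1 hnadj
        exact ⟨this.2, this.1⟩
      have hresyu : G.Adj y u0 → (∃ w ∈ univ \ ({x,y,u0} : Finset V), G.dist y w ≠ G.dist u0 w)
          ∧ (∃ w ∈ univ \ ({x,y,u0} : Finset V), G.dist u0 w ≠ G.dist y w) := by
        intro h
        obtain ⟨q, hq, hnadj⟩ := notAll y hyQ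
        have hqu0 : q ≠ u0 := fun he => hnadj (he ▸ h)
        have h1 : G.Adj u0 q := hQc hu0 hq (Ne.symm hqu0)
        have := lmd_res_one (hWmem q hq hqu0) h1 hnadj
        exact ⟨this.2, this.1⟩
      have hresxy : G.Adj x y → (∃ w ∈ univ \ ({x,y,u0} : Finset V), G.dist x w ≠ G.dist y w) := by
        intro h
        obtain ⟨w0, hw0, hw0u, hd⟩ := hres h
        exact ⟨w0, hWmem w0 hw0 hw0u, hd⟩
      rcases hu' with rfl|rfl|rfl <;> rcases hv' with rfl|rfl|rfl
      · exact absurd hadj (G.irrefl)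
      · exact hresxy hadj
      · exact (hresxu hadj).1
      · obtain ⟨w, hw, hd⟩ := hresxy hadj.symm; exact ⟨w, hw, hd.symm⟩
      · exact absurd hadj (G.irrefl)
      · exact (hresyu hadj).1
      · exact (hresxu hadj.symm).2
      · exact (hresyu hadj.symm).2
      · exact absurd hadj (G.irrefl)
    · rw [card_sdiff_of_subset (subset_univ _), card_univ]
      congr 1
      rw [card_insert_of_notMem (by simp [hxy, hxu0]),
        card_insert_of_notMem (by simp [hyu0]), card_singleton]
  by_cases hadjxy : G.Adj x y
  · by_cases htwin : ∀ q ∈ Q, G.Adj x q ↔ G.Adj y q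
    · -- twin case
      set S : Finset V := Q.filter (fun q => G.Adj x q) with hS
      have hSsub : S ⊆ Q := filter_subset _ _
      have hSx : ∀ q ∈ S, G.Adj x q := fun q hq => (mem_filter.mp hq).2
      have hSy : ∀ q ∈ S, G.Adj y q := fun q hq =>
        (htwin q (hSsub hq)).mp ((mem_filter.mp hq).2)
      have hSnx : ∀ q ∈ Q, q ∉ S → ¬ G.Adj x q := by
        intro q hq hqS hadj
        exact hqS (mem_filter.mpr ⟨hq, hadj⟩)
      have hSny : ∀ q ∈ Q, q ∉ S → ¬ G.Adj y q := by
        intro q hq hqS hadj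
        exact hSnx q hq hqS ((htwin q hq).mpr hadj)
      -- S ∪ {x,y} is a clique, so |S| ≤ n - 4
      have hclS : G.IsClique (((S ∪ {x, y}) : Finset V) : Set V) := by
        intro a ha b hb hab
        simp only [coe_union, Set.mem_union, mem_coe, coe_insert, Set.mem_insert_iff,
          coe_singleton, Set.mem_singleton_iff, mem_insert, mem_singleton] at ha hb
        rcases ha with ha | ha | ha <;> rcases hb with hb | hb | hb
        · exact hQc (hSsub ha) (hSsub hb) hab
        · subst hb; exact (hSx a ha).symm
        · subst hb; exact (hSy a ha).symm
        · subst ha; exact hSx b hb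
        · subst ha; subst hb; exact absurd rfl hab
        · subst ha; subst hb; exact hadjxy
        · subst ha; exact hSy b hb
        · subst ha; subst hb; exact hadjxy.symm
        · subst ha; subst hb; exact absurd rfl hab
      have hcardS : S.card ≤ Fintype.card V - 4 := by
        have h1 := hmax _ hclS
        have hxS : x ∉ S := fun h => hxQ (hSsub h)
        have hyS : y ∉ S := fun h => hyQ (hSsub h)
        have h2 : (S ∪ {x, y}).card = S.card + 2 := by
          rw [union_comm, card_union_of_disjoint (by
            simp only [disjoint_insert_left, disjoint_singleton_left]
            exact ⟨hxS, hyS⟩)]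
          rw [card_insert_of_notMem (by simp [hxy]), card_singleton]
          omega
        omega
      -- S nonempty
      have hQne : Q.Nonempty := card_pos.mp (by omega)
      have hSne : S.Nonempty := by
        rw [nonempty_iff_ne_empty]
        intro hSe
        exact lmd_not_both_pendant hconn hQne hxQ hyQ hcompl hxy
          (fun q hq => hSnx q hq (by simp [hSe])) (fun q hq => hSny q hq (by simp [hSe]))
      obtain ⟨u1, hu1⟩ := hSne
      have hu1Q : u1 ∈ Q := hSsub hu1
      have hQS2 : 1 < (Q \ S).card := by
        rw [card_sdiff_of_subset hSsub]; omega
      obtain ⟨u2, hu2, q3, hq3, hu2q3⟩ := one_lt_card.mp hQS2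
      have hu2Q : u2 ∈ Q := (mem_sdiff.mp hu2).1
      have hu2S : u2 ∉ S := (mem_sdiff.mp hu2).2
      have hq3Q : q3 ∈ Q := (mem_sdiff.mp hq3).1
      have hq3S : q3 ∉ S := (mem_sdiff.mp hq3).2
      have hxu1 : x ≠ u1 := fun he => hxQ (he ▸ hu1Q)
      have hxu2 : x ≠ u2 := fun he => hxQ (he ▸ hu2Q)
      have hu1u2 : u1 ≠ u2 := fun he => hu2S (he ▸ hu1)
      refine ⟨univ \ {x, u1, u2}, ?_, ?_⟩
      · intro u v hu hv hadj
        have hu' : u ∈ ({x, u1, u2} : Finset V) := by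
          by_contra h; exact hu (mem_sdiff.mpr ⟨mem_univ u, h⟩)
        have hv' : v ∈ ({x, u1, u2} : Finset V) := by
          by_contra h; exact hv (mem_sdiff.mpr ⟨mem_univ v, h⟩)
        simp only [mem_insert, mem_singleton] at hu' hv'
        have hq3W : q3 ∈ univ \ ({x, u1, u2} : Finset V) := by
          refine mem_sdiff.mpr ⟨mem_univ q3, ?_⟩
          simp only [mem_insert, mem_singleton, not_or]
          exact ⟨fun he => hxQ (he ▸ hq3Q), fun he => hq3S (he ▸ hu1), hu2q3.symm⟩
        have hyW : y ∈ univ \ ({x, u1, u2} : Finset V) := by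
          refine mem_sdiff.mpr ⟨mem_univ y, ?_⟩
          simp only [mem_insert, mem_singleton, not_or]
          exact ⟨hxy.symm, fun he => hyQ (he ▸ hu1Q), fun he => hyQ (he ▸ hu2Q)⟩
        have hu1q3 : u1 ≠ q3 := fun he => hq3S (he ▸ hu1)
        have hr1 := lmd_res_one hq3W (hQc hu1Q hq3Q hu1q3) (hSnx q3 hq3Q hq3S)
        have hr2 := lmd_res_one hyW (hSy u1 hu1).symm
          (fun h => hSny u2 hu2Q hu2S h.symm)
        rcases hu' with rfl|rfl|rfl <;> rcases hv' with rfl|rfl|rfl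
        · exact absurd hadj (G.irrefl)
        · exact hr1.2
        · exact absurd hadj (hSnx _ hu2Q hu2S)
        · exact hr1.1
        · exact absurd hadj (G.irrefl)
        · exact hr2.1
        · exact absurd hadj (fun _ => hSnx _ hu2Q hu2S hadj.symm)
        · exact hr2.2
        · exact absurd hadj (G.irrefl)
      · rw [card_sdiff_of_subset (subset_univ _), card_univ]
        congr 1
        rw [card_insert_of_notMem (by simp [hxu1, hxu2]),
          card_insert_of_notMem (by simp [hu1u2]), card_singleton]
    · -- non-twin case
      push_neg at htwin
      obtain ⟨w0, hw0Q, hw0⟩ := htwin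
      have hQ2 : 2 ≤ (Q.erase w0).card := by
        rw [card_erase_of_mem hw0Q]; omega
      obtain ⟨u0, hu0⟩ := card_pos.mp (by omega : 0 < (Q.erase w0).card)
      refine main12 u0 (mem_of_mem_erase hu0) ?_
      intro _
      refine ⟨w0, hw0Q, (ne_of_mem_erase hu0).symm, ?_⟩
      rcases hw0 with ⟨hx0, hy0⟩ | ⟨hx0, hy0⟩
      · rw [dist_eq_one_iff_adj.mpr hx0]
        exact (lmd_dist_ne_one hy0).symm
      · rw [dist_eq_one_iff_adj.mpr hy0]
        exact lmd_dist_ne_one hx0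
  · -- x,y non-adjacent
    obtain ⟨u0, hu0⟩ := card_pos.mp (by omega : 0 < Q.card)
    exact main12 u0 hu0 (fun h => absurd h hadjxy)

end LmdUB3
section LmdES
open Finset
/-- If some local resolving set has at most `n - 4` vertices, `G` contains `Γ₁` or `Γ₂`. -/
lemma lmd_embed_of_small [Fintype V] [DecidableEq V] {G : SimpleGraph V} {Q W : Finset V}
    {x y : V}
    (hconn : G.Connected) (hn : 5 ≤ Fintype.card V)
    (hQ : G.IsNClique (Fintype.card V - 2) Q)
    (hxy : x ≠ y) (hxQ : x ∉ Q) (hyQ : y ∉ Q)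
    (hcompl : ∀ v, v ∉ Q → v = x ∨ v = y)
    (hW : IsLocalResolvingSet G W) (hWc : W.card + 4 ≤ Fintype.card V) :
    Nonempty (Gamma1 ↪g G) ∨ Nonempty (Gamma2 ↪g G) := by
  have hQc := hQ.isClique
  have hQcard := hQ.card_eq
  have hQne : Q.Nonempty := card_pos.mp (by omega)
  obtain ⟨hc1, hc2, hc3, hc4, hc5⟩ := lmd_counts (W := W) hxQ hyQ hxy
  set T := Q \ W with hT
  have hTQ : ∀ u, u ∈ T → u ∈ Q := fun u hu => (mem_sdiff.mp hu).1
  have hTW : ∀ u, u ∈ T → u ∉ W := fun u hu => (mem_sdiff.mp hu).2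
  by_cases hxW : x ∈ W <;> by_cases hyW : y ∈ W
  · -- both in W : T has ≥ 4 elements
    have hT4 : 4 ≤ T.card := by
      have := hc3 hxW hyW
      omega
    -- x cannot be pendant
    have hnpx : ¬ (∀ q ∈ Q, ¬ G.Adj x q) := by
      intro hpx
      have e := lmd_pendant_dist hconn hQne hxQ hyQ hcompl hpx
      obtain ⟨sy, hsy2, hsy⟩ := lmd_vals hconn hQc hQne hxy.symm hyQ hxQ
        (fun v hv => (hcompl v hv).symm)
      have hinj : Set.InjOn (fun u => G.dist u y) (T : Set V) := by
        intro u hu v hv he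
        by_contra hne
        obtain ⟨w, hwxy, hwW, hd⟩ := lmd_resolved_pair hW hQc hcompl
          (hTQ u hu) (hTQ v hv) hne (hTW u hu) (hTW v hv)
        rcases hwxy with rfl | rfl
        · have he' : G.dist u y = G.dist v y := he
          exact hd (by rw [e u (hTQ u hu), e v (hTQ v hv), he'])
        · exact hd he
      have hcard := Finset.card_le_card_of_injOn _ (fun u hu => hsy u (hTQ u hu)) hinj
      omega
    have hnpy : ¬ (∀ q ∈ Q, ¬ G.Adj y q) := by
      intro hpy
      have e := lmd_pendant_dist hconn hQne hyQ hxQ (fun v hv => (hcompl v hv).symm) hpy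
      obtain ⟨sx, hsx2, hsx⟩ := lmd_vals hconn hQc hQne hxy hxQ hyQ hcompl
      have hinj : Set.InjOn (fun u => G.dist u x) (T : Set V) := by
        intro u hu v hv he
        by_contra hne
        obtain ⟨w, hwxy, hwW, hd⟩ := lmd_resolved_pair hW hQc hcompl
          (hTQ u hu) (hTQ v hv) hne (hTW u hu) (hTW v hv)
        rcases hwxy with rfl | rfl
        · exact hd he
        · have he' : G.dist u x = G.dist v x := he
          exact hd (by rw [e u (hTQ u hu), e v (hTQ v hv), he'])
      have hcard := Finset.card_le_card_of_injOn _ (fun u hu => hsx u (hTQ u hu)) hinj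
      omega
    push_neg at hnpx hnpy
    obtain ⟨qx, hqxQ, hqx⟩ := hnpx
    obtain ⟨qy, hqyQ, hqy⟩ := hnpy
    -- profiles lie in {1,2} × {1,2} and are injective on T
    set P : V → ℕ × ℕ := fun u => (G.dist u x, G.dist u y) with hP
    have hinj : Set.InjOn P (T : Set V) := by
      intro u hu v hv he
      by_contra hne
      obtain ⟨w, hwxy, hwW, hd⟩ := lmd_resolved_pair hW hQc hcompl
        (hTQ u hu) (hTQ v hv) hne (hTW u hu) (hTW v hv)
      have he1 : G.dist u x = G.dist v x := congrArg Prod.fst he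
      have he2 : G.dist u y = G.dist v y := congrArg Prod.snd he
      rcases hwxy with rfl | rfl
      · exact hd he1
      · exact hd he2
    have hmaps : ∀ u ∈ T, P u ∈ ({1, 2} ×ˢ {1, 2} : Finset (ℕ × ℕ)) := by
      intro u hu
      refine mem_product.mpr ⟨?_, ?_⟩
      · rcases lmd_dist_one_or_two hQc hxQ hqxQ hqx (hTQ u hu) with h | h <;> simp [hP, h]
      · rcases lmd_dist_one_or_two hQc hyQ hqyQ hqy (hTQ u hu) with h | h <;> simp [hP, h]
    have himg : T.image P = ({1, 2} ×ˢ {1, 2} : Finset (ℕ × ℕ)) := by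
      apply eq_of_subset_of_card_le
      · intro p hp
        obtain ⟨u, hu, rfl⟩ := mem_image.mp hp
        exact hmaps u hu
      · rw [card_image_of_injOn hinj]
        have : ({1, 2} ×ˢ {1, 2} : Finset (ℕ × ℕ)).card = 4 := by decide
        omega
    have hget : ∀ p ∈ ({1, 2} ×ˢ {1, 2} : Finset (ℕ × ℕ)), ∃ u ∈ T, P u = p := by
      intro p hp
      rw [← himg] at hp
      obtain ⟨u, hu, he⟩ := mem_image.mp hp
      exact ⟨u, hu, he⟩
    obtain ⟨a, haT, ha⟩ := hget (1, 1) (by decide)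
    obtain ⟨b, hbT, hb⟩ := hget (1, 2) (by decide)
    obtain ⟨c, hcT, hc⟩ := hget (2, 1) (by decide)
    obtain ⟨d, hdT, hd⟩ := hget (2, 2) (by decide)
    have hax : G.dist a x = 1 := congrArg Prod.fst ha
    have hay : G.dist a y = 1 := congrArg Prod.snd ha
    have hbx : G.dist b x = 1 := congrArg Prod.fst hb
    have hby : G.dist b y = 2 := congrArg Prod.snd hb
    have hcx : G.dist c x = 2 := congrArg Prod.fst hc
    have hcy : G.dist c y = 1 := congrArg Prod.snd hc
    have hdx : G.dist d x = 2 := congrArg Prod.fst hd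
    have hdy : G.dist d y = 2 := congrArg Prod.snd hd
    have haQ := hTQ a haT
    have hbQ := hTQ b hbT
    have hcQ := hTQ c hcT
    have hdQ := hTQ d hdT
    have hne : ∀ {u v : V}, u ∈ T → v ∈ T → P u ≠ P v → u ≠ v := by
      intro u v hu hv hPuv he
      exact hPuv (he ▸ rfl)
    have nab : a ≠ b := hne haT hbT (by rw [ha, hb]; decide)
    have nac : a ≠ c := hne haT hcT (by rw [ha, hc]; decide)
    have nad : a ≠ d := hne haT hdT (by rw [ha, hd]; decide)
    have nbc : b ≠ c := hne hbT hcT (by rw [hb, hc]; decide)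
    have nbd : b ≠ d := hne hbT hdT (by rw [hb, hd]; decide)
    have ncd : c ≠ d := hne hcT hdT (by rw [hc, hd]; decide)
    have adj1 : ∀ {u : V}, G.dist u x = 1 → G.Adj x u :=
      fun h => (dist_eq_one_iff_adj.mp h).symm
    have adj1y : ∀ {u : V}, G.dist u y = 1 → G.Adj y u :=
      fun h => (dist_eq_one_iff_adj.mp h).symm
    have nadj2 : ∀ {u : V}, G.dist u x = 2 → ¬ G.Adj x u :=
      fun h hadj => by rw [dist_eq_one_iff_adj.mpr hadj.symm] at h; omega
    have nadj2y : ∀ {u : V}, G.dist u y = 2 → ¬ G.Adj y u :=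
      fun h hadj => by rw [dist_eq_one_iff_adj.mpr hadj.symm] at h; omega
    exact lmd_embed_of_config (hQc haQ hbQ nab) (hQc haQ hcQ nac) (hQc haQ hdQ nad)
      (hQc hbQ hcQ nbc) (hQc hbQ hdQ nbd) (hQc hcQ hdQ ncd)
      (adj1 hax) (adj1 hbx) (nadj2 hcx) (nadj2 hdx)
      (adj1y hay) (adj1y hcy) (nadj2y hby) (nadj2y hdy)
      (fun he => hxQ (he ▸ hcQ)) (fun he => hxQ (he ▸ hdQ))
      (fun he => hyQ (he ▸ hbQ)) (fun he => hyQ (he ▸ hdQ)) hxy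
  · -- x ∈ W, y ∉ W : contradiction
    exfalso
    have hT3 : 3 ≤ T.card := by
      have := hc4 hxW
      omega
    obtain ⟨sx, hsx2, hsx⟩ := lmd_vals hconn hQc hQne hxy hxQ hyQ hcompl
    have hinj : Set.InjOn (fun u => G.dist u x) (T : Set V) := by
      intro u hu v hv he
      by_contra hne
      obtain ⟨w, hwxy, hwW, hd⟩ := lmd_resolved_pair hW hQc hcompl
        (hTQ u hu) (hTQ v hv) hne (hTW u hu) (hTW v hv)
      rcases hwxy with rfl | rfl
      · exact hd he
      · exact hyW hwW
    have hcard := Finset.card_le_card_of_injOn _ (fun u hu => hsx u (hTQ u hu)) hinj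
    omega
  · -- y ∈ W, x ∉ W : contradiction
    exfalso
    have hT3 : 3 ≤ T.card := by
      have := hc5 hyW
      omega
    obtain ⟨sy, hsy2, hsy⟩ := lmd_vals hconn hQc hQne hxy.symm hyQ hxQ
      (fun v hv => (hcompl v hv).symm)
    have hinj : Set.InjOn (fun u => G.dist u y) (T : Set V) := by
      intro u hu v hv he
      by_contra hne
      obtain ⟨w, hwxy, hwW, hd⟩ := lmd_resolved_pair hW hQc hcompl
        (hTQ u hu) (hTQ v hv) hne (hTW u hu) (hTW v hv)
      rcases hwxy with rfl | rfl
      · exact hxW hwW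
      · exact hd he
    have hcard := Finset.card_le_card_of_injOn _ (fun u hu => hsy u (hTQ u hu)) hinj
    omega
  · -- neither in W : contradiction
    exfalso
    have hT2 : 1 < T.card := by omega
    obtain ⟨u, hu, v, hv, huv⟩ := one_lt_card.mp hT2
    obtain ⟨w, hwxy, hwW, _⟩ := lmd_resolved_pair hW hQc hcompl
      (hTQ u hu) (hTQ v hv) huv (hTW u hu) (hTW v hv)
    rcases hwxy with rfl | rfl
    · exact hxW hwW
    · exact hyW hwW
end LmdES
/-- If `G` is connected with `n(G) ≥ 5` and `ω(G) = n(G) - 2`, then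
`n(G) - 4 ≤ dim_l(G) ≤ n(G) - 3`; moreover `dim_l(G) = n(G) - 3` iff `G` is
`{Γ₁,Γ₂}`-free, and `dim_l(G) = n(G) - 4` iff `G` contains an induced `Γ₁` or `Γ₂`. -/
theorem stmt_12 [Fintype V] (G : SimpleGraph V) (hconn : G.Connected)
    (hn : 5 ≤ Fintype.card V) (hw : G.cliqueNum = Fintype.card V - 2) :
    (Fintype.card V - 4 ≤ localDim G ∧ localDim G ≤ Fintype.card V - 3) ∧
    (localDim G = Fintype.card V - 3 ↔
      IsEmpty (Gamma1 ↪g G) ∧ IsEmpty (Gamma2 ↪g G)) ∧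
    (localDim G = Fintype.card V - 4 ↔
      (Nonempty (Gamma1 ↪g G) ∨ Nonempty (Gamma2 ↪g G))) := by
  classical
  obtain ⟨Q, hQ⟩ := G.exists_isNClique_cliqueNum
  rw [hw] at hQ
  have hmax : ∀ s : Finset V, G.IsClique (s : Set V) → s.card ≤ Fintype.card V - 2 := by
    intro s hs
    rw [← hw]
    exact SimpleGraph.IsClique.card_le_cliqueNum (tc := hs)
  have hQcard := hQ.card_eq
  have hcc : (Qᶜ : Finset V).card = 2 := by
    rw [Finset.card_compl]
    omega
  obtain ⟨x, y, hxy, hc2⟩ := Finset.card_eq_two.mp hcc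
  have hxQ : x ∉ Q := by
    have hx : x ∈ (Qᶜ : Finset V) := by rw [hc2]; exact Finset.mem_insert_self _ _
    simpa using hx
  have hyQ : y ∉ Q := by
    have hy : y ∈ (Qᶜ : Finset V) := by rw [hc2]; simp
    simpa using hy
  have hcompl : ∀ v, v ∉ Q → v = x ∨ v = y := by
    intro v hv
    have hv' : v ∈ (Qᶜ : Finset V) := Finset.mem_compl.mpr hv
    rw [hc2] at hv'
    simpa using hv'
  obtain ⟨W3, hW3, hW3c⟩ := lmd_UB3 hconn hn hQ hxy hxQ hyQ hcompl hmax
  have hub : localDim G ≤ Fintype.card V - 3 := hW3c ▸ lmd_localDim_le hW3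
  have hlb : Fintype.card V - 4 ≤ localDim G :=
    lmd_le_localDim (fun W hW => lmd_LB4 hconn hn hQ hxy hxQ hyQ hcompl hW)
  by_cases hemb : Nonempty (Gamma1 ↪g G) ∨ Nonempty (Gamma2 ↪g G)
  · have hsm : ∃ W : Finset V, IsLocalResolvingSet G W ∧ W.card = Fintype.card V - 4 := by
      rcases hemb with ⟨⟨f⟩⟩ | ⟨⟨f⟩⟩
      · exact lmd_small_of_embed1 f
      · exact lmd_small_of_embed2 f
    obtain ⟨W4, hW4, hW4c⟩ := hsm
    have hdim : localDim G = Fintype.card V - 4 :=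
      le_antisymm (hW4c ▸ lmd_localDim_le hW4) hlb
    refine ⟨⟨hlb, hub⟩, ?_, iff_of_true hdim hemb⟩
    constructor
    · intro h
      exfalso
      omega
    · rintro ⟨h1, h2⟩
      exfalso
      rcases hemb with ⟨f⟩ | ⟨f⟩
      · exact h1.false f.some
      · exact h2.false f.some
  · push_neg at hemb
    have hfree : Fintype.card V - 3 ≤ localDim G := by
      refine lmd_le_localDim (fun W hW => ?_)
      by_contra hc
      have h4 : W.card + 4 ≤ Fintype.card V := by omega
      rcases lmd_embed_of_small hconn hn hQ hxy hxQ hyQ hcompl hW h4 with h | h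
      · exact (not_nonempty_iff.mpr hemb.1) h
      · exact (not_nonempty_iff.mpr hemb.2) h
    have hdim : localDim G = Fintype.card V - 3 := le_antisymm hub hfree
    refine ⟨⟨hlb, hub⟩,
      iff_of_true hdim ⟨hemb.1, hemb.2⟩, ?_⟩
    constructor
    · intro h
      exfalso
      omega
    · intro h
      exfalso
      rcases h with h | h
      · exact (not_nonempty_iff.mpr hemb.1) h
      · exact (not_nonempty_iff.mpr hemb.2) h
end

section
/- Let G be a connected graph and let S ⊆ V(G) be a set of vertices such that for any two distinct vertices s, s' ∈ S lying in a common maximum clique Q, one has N_G(s) ∩ (V(G) \ Q) ≠ N_G(s') ∩ (V(G) \ Q). Then V(G) \ S is a local resolving set for G, and hence dim_l(G) ≤ n(G) - |S|. -/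
open SimpleGraph

variable {V : Type*}

/-- If `Q` is a maximum clique of a connected graph `G` and `S ⊆ Q` is such that distinct
vertices of `S` have distinct open-neighborhood traces on `V(G) \ Q`, then `V(G) \ S` is a
local resolving set and hence `dim_l(G) ≤ n(G) - |S|`. -/
theorem stmt_17 [Fintype V] [DecidableEq V] (G : SimpleGraph V) (hconn : G.Connected)
    (Q S : Finset V) (hQ : G.IsNClique G.cliqueNum Q) (hSQ : S ⊆ Q)
    (htrace : ∀ s ∈ S, ∀ s' ∈ S, s ≠ s' →
      {x : V | x ∉ Q ∧ G.Adj s x} ≠ {x : V | x ∉ Q ∧ G.Adj s' x}) :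
    IsLocalResolvingSet G (Finset.univ \ S) ∧
      localDim G ≤ Fintype.card V - S.card := by
  have hres : IsLocalResolvingSet G (Finset.univ \ S) := by
    intro u v hu hv hadj
    have hu' : u ∈ S := by simpa using hu
    have hv' : v ∈ S := by simpa using hv
    have hne : u ≠ v := hadj.ne
    have hT := htrace u hu' v hv' hne
    have : ∃ x : V, x ∉ Q ∧ (G.Adj u x ↔ ¬ G.Adj v x) := by
      by_contra hcon
      push_neg at hcon
      apply hT
      ext x
      simp only [Set.mem_setOf_eq]
      constructor
      · rintro ⟨hxQ, hux⟩
        refine ⟨hxQ, ?_⟩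
        rcases hcon x hxQ with ⟨_, h⟩ | ⟨h, _⟩
        · exact h
        · exact absurd hux h
      · rintro ⟨hxQ, hvx⟩
        refine ⟨hxQ, ?_⟩
        rcases hcon x hxQ with ⟨h, _⟩ | ⟨_, h⟩
        · exact h
        · exact absurd hvx h
    obtain ⟨x, hxQ, hiff⟩ := this
    have hxS : x ∉ S := fun h => hxQ (hSQ h)
    refine ⟨x, by simp [hxS], ?_⟩
    rcases Classical.em (G.Adj u x) with h | h
    · have hvx : ¬ G.Adj v x := hiff.mp h
      have h1 : G.dist u x = 1 := dist_eq_one_iff_adj.mpr h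
      have h2 : G.dist v x ≠ 1 := fun hc => hvx (dist_eq_one_iff_adj.mp hc)
      omega
    · have hvx : G.Adj v x := by
        by_contra hvx
        exact h (hiff.mpr hvx)
      have h1 : G.dist v x = 1 := dist_eq_one_iff_adj.mpr hvx
      have h2 : G.dist u x ≠ 1 := fun hc => h (dist_eq_one_iff_adj.mp hc)
      omega
  refine ⟨hres, ?_⟩
  have hcard : (Finset.univ \ S).card = Fintype.card V - S.card := by
    rw [Finset.card_sdiff_of_subset (Finset.subset_univ S), Finset.card_univ]
  exact Nat.sInf_le ⟨Finset.univ \ S, hres, hcard⟩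
end

section
/- If ω(G) = n(G) - 2, G is connected with n(G) ≥ 5, and G contains an induced subgraph isomorphic to Γ_1 or Γ_2, then dim_l(G) ≤ n(G) - 4. -/
open SimpleGraph

variable {V : Type*}

private lemma dist_ne_of_adj_of_not_adj [Fintype V] {G : SimpleGraph V} {a b w : V}
    (h1 : G.Adj a w) (h2 : ¬ G.Adj b w) : G.dist a w ≠ G.dist b w := by
  have ha : G.dist a w = 1 := dist_eq_one_iff_adj.mpr h1
  intro h
  exact h2 (dist_eq_one_iff_adj.mp (by omega))

private lemma key_lemma [Fintype V] {G : SimpleGraph V} (f : Fin 6 → V)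
    (hinj : Function.Injective f)
    (h04 : G.Adj (f 0) (f 4)) (h14 : G.Adj (f 1) (f 4))
    (h05 : G.Adj (f 0) (f 5)) (h25 : G.Adj (f 2) (f 5))
    (n24 : ¬ G.Adj (f 2) (f 4)) (n34 : ¬ G.Adj (f 3) (f 4))
    (n15 : ¬ G.Adj (f 1) (f 5)) (n35 : ¬ G.Adj (f 3) (f 5)) :
    localDim G ≤ Fintype.card V - 4 := by
  classical
  set S : Finset V := {f 0, f 1, f 2, f 3} with hS
  have hcardS : S.card = 4 := by
    rw [hS]
    rw [Finset.card_insert_of_notMem, Finset.card_insert_of_notMem,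
        Finset.card_insert_of_notMem, Finset.card_singleton] <;>
      simp [hinj.eq_iff, Fin.ext_iff] <;> decide
  have hmem : ∀ v, v ∉ Finset.univ \ S ↔ v ∈ S := by
    intro v; simp
  apply Nat.sInf_le
  refine ⟨Finset.univ \ S, ?_, by rw [Finset.card_sdiff_of_subset (Finset.subset_univ S), hcardS, Finset.card_univ]⟩
  intro u v hu hv hadj
  have h4 : f 4 ∈ Finset.univ \ S := by
    simp [hS, hinj.eq_iff, Fin.ext_iff]
  have h5 : f 5 ∈ Finset.univ \ S := by
    simp [hS, hinj.eq_iff, Fin.ext_iff]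
  rw [hmem] at hu hv
  simp only [hS, Finset.mem_insert, Finset.mem_singleton] at hu hv
  have hne : u ≠ v := hadj.ne
  rcases hu with rfl | rfl | rfl | rfl <;> rcases hv with rfl | rfl | rfl | rfl <;>
    first
      | exact absurd rfl hne
      | exact ⟨f 5, h5, dist_ne_of_adj_of_not_adj h05 n15⟩
      | exact ⟨f 5, h5, dist_ne_of_adj_of_not_adj h05 n35⟩
      | exact ⟨f 5, h5, dist_ne_of_adj_of_not_adj h25 n15⟩
      | exact ⟨f 5, h5, dist_ne_of_adj_of_not_adj h25 n35⟩
      | exact ⟨f 5, h5, (dist_ne_of_adj_of_not_adj h05 n15).symm⟩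
      | exact ⟨f 5, h5, (dist_ne_of_adj_of_not_adj h05 n35).symm⟩
      | exact ⟨f 5, h5, (dist_ne_of_adj_of_not_adj h25 n15).symm⟩
      | exact ⟨f 5, h5, (dist_ne_of_adj_of_not_adj h25 n35).symm⟩
      | exact ⟨f 4, h4, dist_ne_of_adj_of_not_adj h04 n24⟩
      | exact ⟨f 4, h4, dist_ne_of_adj_of_not_adj h04 n34⟩
      | exact ⟨f 4, h4, dist_ne_of_adj_of_not_adj h14 n24⟩
      | exact ⟨f 4, h4, dist_ne_of_adj_of_not_adj h14 n34⟩
      | exact ⟨f 4, h4, (dist_ne_of_adj_of_not_adj h04 n24).symm⟩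
      | exact ⟨f 4, h4, (dist_ne_of_adj_of_not_adj h04 n34).symm⟩
      | exact ⟨f 4, h4, (dist_ne_of_adj_of_not_adj h14 n24).symm⟩
      | exact ⟨f 4, h4, (dist_ne_of_adj_of_not_adj h14 n34).symm⟩


private lemma key1 [Fintype V] {G : SimpleGraph V} (f : Gamma1 ↪g G) :
    localDim G ≤ Fintype.card V - 4 :=
  key_lemma (fun i => f i) f.injective
    (f.map_adj_iff.mpr (by simp only [Gamma1, Gamma2]; rw [SimpleGraph.fromRel_adj]; decide)) (f.map_adj_iff.mpr (by simp only [Gamma1, Gamma2]; rw [SimpleGraph.fromRel_adj]; decide))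
    (f.map_adj_iff.mpr (by simp only [Gamma1, Gamma2]; rw [SimpleGraph.fromRel_adj]; decide)) (f.map_adj_iff.mpr (by simp only [Gamma1, Gamma2]; rw [SimpleGraph.fromRel_adj]; decide))
    (fun h => absurd (f.map_adj_iff.mp h) (by simp only [Gamma1, Gamma2]; rw [SimpleGraph.fromRel_adj]; decide))
    (fun h => absurd (f.map_adj_iff.mp h) (by simp only [Gamma1, Gamma2]; rw [SimpleGraph.fromRel_adj]; decide))
    (fun h => absurd (f.map_adj_iff.mp h) (by simp only [Gamma1, Gamma2]; rw [SimpleGraph.fromRel_adj]; decide))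
    (fun h => absurd (f.map_adj_iff.mp h) (by simp only [Gamma1, Gamma2]; rw [SimpleGraph.fromRel_adj]; decide))

private lemma key2 [Fintype V] {G : SimpleGraph V} (f : Gamma2 ↪g G) :
    localDim G ≤ Fintype.card V - 4 :=
  key_lemma (fun i => f i) f.injective
    (f.map_adj_iff.mpr (by simp only [Gamma1, Gamma2]; rw [SimpleGraph.fromRel_adj]; decide)) (f.map_adj_iff.mpr (by simp only [Gamma1, Gamma2]; rw [SimpleGraph.fromRel_adj]; decide))
    (f.map_adj_iff.mpr (by simp only [Gamma1, Gamma2]; rw [SimpleGraph.fromRel_adj]; decide)) (f.map_adj_iff.mpr (by simp only [Gamma1, Gamma2]; rw [SimpleGraph.fromRel_adj]; decide))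
    (fun h => absurd (f.map_adj_iff.mp h) (by simp only [Gamma1, Gamma2]; rw [SimpleGraph.fromRel_adj]; decide))
    (fun h => absurd (f.map_adj_iff.mp h) (by simp only [Gamma1, Gamma2]; rw [SimpleGraph.fromRel_adj]; decide))
    (fun h => absurd (f.map_adj_iff.mp h) (by simp only [Gamma1, Gamma2]; rw [SimpleGraph.fromRel_adj]; decide))
    (fun h => absurd (f.map_adj_iff.mp h) (by simp only [Gamma1, Gamma2]; rw [SimpleGraph.fromRel_adj]; decide))

/-- If `G` is connected with `n(G) ≥ 5`, `ω(G) = n(G) - 2`, and `G` contains an induced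
subgraph isomorphic to `Γ₁` or `Γ₂`, then `dim_l(G) ≤ n(G) - 4`. -/
theorem stmt_18 [Fintype V] (G : SimpleGraph V) (hconn : G.Connected)
    (hn : 5 ≤ Fintype.card V) (hw : G.cliqueNum = Fintype.card V - 2)
    (hind : Nonempty (Gamma1 ↪g G) ∨ Nonempty (Gamma2 ↪g G)) :
    localDim G ≤ Fintype.card V - 4 := by
  rcases hind with h1 | h1
  · obtain ⟨f⟩ := h1
    exact key1 f
  · obtain ⟨f⟩ := h1
    exact key2 f
end
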